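/- arXiv:1612.01965 — 4 statements merged into one kernel-verified Lean document; each statement's English description precedes it below -/
import Mathlib

section
/- Let D be a digraph on vertex set V, and let E_contr be a set of arcs of D such that the arcs of E_contr form a collection of vertex-disjoint directed paths. Let D' be the digraph obtained from D by contracting every arc of E_contr (identifying the vertices of each path to a single vertex, keeping one arc between contracted classes when present). If D' has a Hamilton cycle, then D has a Hamilton cycle. -/
/-- A Hamilton cycle in a digraph with arc relation `E`: a single cyclic
permutation of all vertices each of whose arcs is present. -/
def HamCycle {V : Type*} [Fintype V] [DecidableEq V] (E : V → V → Prop) : Prop :=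
  ∃ σ : Equiv.Perm V, σ.IsCycle ∧ σ.support = Finset.univ ∧ ∀ v, E v (σ v)

lemma aux_head?_flatMap {α β : Type*} {path : α → List β} (hpne : ∀ c, path c ≠ []) :
    ∀ (L : List α) (h : L ≠ []), (L.flatMap path).head? = (path (L.head h)).head? := by
  intro L h
  cases L with
  | nil => exact absurd rfl h
  | cons A L =>
    simp only [List.flatMap_cons, List.head?_append, List.head_cons]
    cases hh : (path A).head? with
    | none => exact absurd (List.head?_eq_none_iff.mp hh) (hpne A)
    | some a => simp

lemma aux_getLast?_flatMap {α β : Type*} {path : α → List β} (hpne : ∀ c, path c ≠ []) :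
    ∀ (L : List α) (h : L ≠ []), (L.flatMap path).getLast? = (path (L.getLast h)).getLast? := by
  intro L h
  induction L with
  | nil => exact absurd rfl h
  | cons A L ih =>
    cases L with
    | nil => simp
    | cons B L' =>
      rw [List.flatMap_cons, List.getLast?_append, ih (by simp)]
      have h1 : (A :: B :: L').getLast h = (B :: L').getLast (by simp) :=
        List.getLast_cons (by simp)
      rw [h1]
      obtain ⟨a, ha⟩ := Option.isSome_iff_exists.mp
        (List.getLast?_isSome.mpr (hpne ((B :: L').getLast (by simp))))
      simp [ha]

lemma aux_chain_flatMap {α β : Type*} {E : β → β → Prop} {path : α → List β} {σ : α → α}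
    (hpne : ∀ c, path c ≠ []) (hch : ∀ c, (path c).Chain' E)
    (hcons : ∀ c a b, (path c).getLast? = some a → (path (σ c)).head? = some b → E a b) :
    ∀ (L : List α), L.Chain' (fun A B => B = σ A) → (L.flatMap path).Chain' E := by
  intro L
  induction L with
  | nil => intro _; exact List.isChain_nil
  | cons A L ih =>
    intro hL
    rw [List.flatMap_cons]
    refine (hch A).append (ih hL.tail) ?_
    intro x hx y hy
    cases L with
    | nil => simp at hy
    | cons B L' =>
      rw [aux_head?_flatMap hpne (B :: L') (by simp), List.head_cons] at hy
      have hBA : B = σ A := (List.isChain_cons_cons.mp hL).1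
      exact hcons A x y hx (hBA ▸ hy)

lemma aux_cyclic_formPerm {α : Type*} [DecidableEq α] {E : α → α → Prop} {l : List α}
    (hn : l.Nodup) (hc : l.Chain' E)
    (hw : ∀ a b, l.getLast? = some a → l.head? = some b → E a b) :
    ∀ v ∈ l, E v (l.formPerm v) := by
  intro v hv
  obtain ⟨i, hi, rfl⟩ := List.getElem_of_mem hv
  rw [List.formPerm_apply_getElem _ hn]
  by_cases h : i + 1 < l.length
  · have := List.isChain_iff_getElem.mp hc i (by omega)
    have hmod : (i + 1) % l.length = i + 1 := Nat.mod_eq_of_lt h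
    simpa [hmod] using this
  · have hlen : i + 1 = l.length := by omega
    have hne : l ≠ [] := List.ne_nil_of_length_pos (by omega)
    have hmod : (i + 1) % l.length = 0 := by rw [hlen]; exact Nat.mod_self _
    have h0 : l[(i + 1) % l.length]'(Nat.mod_lt _ (i.zero_le.trans_lt hi)) = l.head hne := by
      rw [List.head_eq_getElem]
      congr 1
    have hl : l[i] = l.getLast hne := by
      rw [List.getLast_eq_getElem]
      congr 1
      omega
    rw [h0, hl]
    exact hw _ _ (List.getLast?_eq_getLast hne ▸ rfl) (List.head?_eq_head hne ▸ rfl)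

/-- If the digraph obtained by contracting a collection of vertex-disjoint
directed paths (the classes of the partition `s`, each carrying a directed
Hamilton path of `E`) has a Hamilton cycle, then so does the original digraph. -/
theorem stmt0 {V : Type*} [Fintype V] [DecidableEq V]
    (E : V → V → Prop) (s : Setoid V) [DecidableEq (Quotient s)] [Fintype (Quotient s)]
    (path : Quotient s → List V)
    (hnodup : ∀ c, (path c).Nodup)
    (hne : ∀ c, path c ≠ [])
    (hclass : ∀ c v, v ∈ path c ↔ Quotient.mk s v = c)
    (hchain : ∀ c, (path c).Chain' E)
    (hcontr : HamCycle (fun A B : Quotient s => A ≠ B ∧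
      ∃ a b, (path A).getLast? = some a ∧ (path B).head? = some b ∧ E a b)) :
    HamCycle E := by
  obtain ⟨σ, hcyc, hsupp, hEσ⟩ := hcontr
  obtain ⟨c₀, hc₀, -⟩ := id hcyc
  set L : List (Quotient s) := σ.toList c₀ with hLdef
  have hLn : L.Nodup := Equiv.Perm.nodup_toList σ c₀
  have hform : L.formPerm = σ := by
    rw [hLdef, Equiv.Perm.formPerm_toList, hcyc.cycleOf_eq hc₀]
  have hmemsup : ∀ c : Quotient s, c ∈ σ.support := by
    intro c; rw [hsupp]; exact Finset.mem_univ c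
  have hmemL : ∀ c : Quotient s, c ∈ L := by
    intro c
    rw [hLdef, Equiv.Perm.mem_toList_iff]
    refine ⟨?_, Equiv.Perm.mem_support.mpr hc₀⟩
    exact hcyc.sameCycle hc₀ (Equiv.Perm.mem_support.mp (hmemsup c))
  have hL2 : 2 ≤ L.length := by
    rw [hLdef, Equiv.Perm.length_toList,
      hcyc.cycleOf_eq hc₀]
    exact hcyc.two_le_card_support
  have hLne : L ≠ [] := List.ne_nil_of_length_pos (by omega)
  -- consecutive elements of L are related by σ
  have hLchain : L.Chain' (fun A B => B = σ A) := by
    refine List.isChain_iff_getElem.mpr ?_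
    intro i hi
    have := List.formPerm_apply_getElem L hLn i (by omega)
    rw [hform] at this
    have hmod : (i + 1) % L.length = i + 1 := Nat.mod_eq_of_lt (by omega)
    simp only [hmod] at this
    exact this.symm
  -- σ maps the last of L to the head of L
  have hwrapL : σ (L.getLast hLne) = L.head hLne := by
    have hi : L.length - 1 < L.length := by omega
    have := List.formPerm_apply_getElem L hLn (L.length - 1) hi
    rw [hform] at this
    have hmod : (L.length - 1 + 1) % L.length = 0 := by
      have : L.length - 1 + 1 = L.length := by omega
      rw [this]; exact Nat.mod_self _
    rw [List.getLast_eq_getElem, this]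
    simp only [hmod]
    exact List.getElem_zero _
  set M : List V := L.flatMap path with hMdef
  have hMn : M.Nodup := by
    rw [hMdef, List.nodup_flatMap]
    refine ⟨fun c _ => hnodup c, ?_⟩
    refine hLn.imp ?_
    intro A B hAB
    intro x hxA hxB
    exact hAB (((hclass A x).mp hxA) ▸ ((hclass B x).mp hxB))
  have hMmem : ∀ v : V, v ∈ M := by
    intro v
    rw [hMdef, List.mem_flatMap]
    exact ⟨Quotient.mk s v, hmemL _, (hclass _ v).mpr rfl⟩
  have hMne : M ≠ [] := by
    intro h
    have := hMmem ((path (L.head hLne)).head (hne _))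
    rw [h] at this
    exact List.not_mem_nil this
  have hM2 : 2 ≤ M.length := by
    -- M contains the heads of at least two distinct paths
    by_contra h
    push_neg at h
    interval_cases hM : M.length
    · exact hMne (List.eq_nil_of_length_eq_zero hM)
    · obtain ⟨x, hx⟩ := List.length_eq_one_iff.mp hM
      have hA := hmemL c₀
      have hB := hmemL (σ c₀)
      have hmA : (path c₀).head (hne _) ∈ M := by
        rw [hMdef, List.mem_flatMap]; exact ⟨c₀, hA, List.head_mem _⟩
      have hmB : (path (σ c₀)).head (hne _) ∈ M := by
        rw [hMdef, List.mem_flatMap]; exact ⟨σ c₀, hB, List.head_mem _⟩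
      rw [hx, List.mem_singleton] at hmA hmB
      have : Quotient.mk s ((path c₀).head (hne _)) = c₀ :=
        (hclass _ _).mp (List.head_mem _)
      have h2 : Quotient.mk s ((path (σ c₀)).head (hne _)) = σ c₀ :=
        (hclass _ _).mp (List.head_mem _)
      have e1 : σ c₀ = Quotient.mk s x := by rw [← h2, hmB]
      have e2 : c₀ = Quotient.mk s x := by rw [← this, hmA]
      exact hc₀ (e1.trans e2.symm)
  have hMuniv : M.toFinset = Finset.univ :=
    Finset.eq_univ_iff_forall.mpr fun v => List.mem_toFinset.mpr (hMmem v)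
  -- chain on M
  have hcons : ∀ c a b, (path c).getLast? = some a → (path (σ c)).head? = some b → E a b := by
    intro c a b ha hb
    obtain ⟨-, a', b', ha', hb', hab⟩ := hEσ c
    rw [ha'] at ha; rw [hb'] at hb
    cases ha; cases hb
    exact hab
  have hMchain : M.Chain' E := aux_chain_flatMap hne hchain hcons L hLchain
  have hMwrap : ∀ a b, M.getLast? = some a → M.head? = some b → E a b := by
    intro a b ha hb
    rw [hMdef, aux_getLast?_flatMap hne L hLne] at ha
    rw [hMdef, aux_head?_flatMap hne L hLne] at hb
    rw [← hwrapL] at hb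
    exact hcons _ _ _ ha hb
  refine ⟨M.formPerm, List.isCycle_formPerm hMn hM2, ?_, ?_⟩
  · rw [List.support_formPerm_of_nodup M hMn, hMuniv]
    intro x hx
    rw [hx] at hM2
    simp at hM2
  · intro v
    exact aux_cyclic_formPerm hMn hMchain hMwrap v (hMmem v)
end

section
/- Let P = (p_1, p_2, ..., p_s) be a directed path in a digraph D, and suppose indices k < l with 2 ≤ k and l ≤ s satisfy: (p_s, p_k) and (p_{k-1}, p_l) are arcs of D. Then P' = (p_1, ..., p_{k-1}, p_l, p_{l+1}, ..., p_s, p_k, p_{k+1}, ..., p_{l-1}) is a directed path in D on the same vertex set as P, with the same starting vertex p_1 and ending vertex p_{l-1}. -/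
private lemma chain'_map_range'_aux {V : Type*} (E : V → V → Prop) (p : ℕ → V) (a n : ℕ)
    (h : ∀ i, a ≤ i → i + 1 < a + n → E (p i) (p (i + 1))) :
    List.Chain' E ((List.range' a n).map p) := by
  rw [List.Chain', List.isChain_iff_getElem]
  intro i hi
  simp only [List.get_eq_getElem, List.getElem_map, List.getElem_range']
  simp only [List.length_map, List.length_range'] at hi
  have : a + 1 * (i + 1) = (a + 1 * i) + 1 := by ring
  rw [this]
  exact h _ (by omega) (by omega)

private lemma head?_map_range'_aux {V : Type*} (p : ℕ → V) (a n : ℕ) (hn : 0 < n) :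
    ((List.range' a n).map p).head? = some (p a) := by
  obtain ⟨m, rfl⟩ := Nat.exists_eq_add_of_lt hn
  simp [List.range'_succ]

private lemma getLast?_map_range'_aux {V : Type*} (p : ℕ → V) (a n : ℕ) (hn : 0 < n) :
    ((List.range' a n).map p).getLast? = some (p (a + n - 1)) := by
  obtain ⟨m, rfl⟩ := Nat.exists_eq_add_of_lt hn
  rw [show 0 + m + 1 = m + 1 by omega, List.range'_concat, List.map_append,
    List.map_singleton, List.getLast?_concat]
  congr 2
  omega

/-- Double rotation: if `P = (p 1, ..., p s)` is a directed path in the digraph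
`E` and `2 ≤ k < l ≤ s` with arcs `(p s, p k)` and `(p (k-1), p l)` present,
then `P' = (p 1,...,p (k-1), p l,...,p s, p k,...,p (l-1))` is a directed path
on the same vertex set, with the same start `p 1` and endpoint `p (l-1)`. -/
theorem stmt2 {V : Type*} [DecidableEq V] (E : V → V → Prop)
    (s k l : ℕ) (p : ℕ → V)
    (hinj : ∀ i j, 1 ≤ i → i ≤ s → 1 ≤ j → j ≤ s → p i = p j → i = j)
    (hpath : ∀ i, 1 ≤ i → i < s → E (p i) (p (i + 1)))
    (hk : 2 ≤ k) (hkl : k < l) (hls : l ≤ s)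
    (h1 : E (p s) (p k)) (h2 : E (p (k - 1)) (p l)) :
    let P' : List V := (List.range' 1 (k - 1)).map p ++ (List.range' l (s - l + 1)).map p ++
      (List.range' k (l - k)).map p
    P'.Chain' E ∧ P'.Perm ((List.range' 1 s).map p) ∧
      P'.head? = some (p 1) ∧ P'.getLast? = some (p (l - 1)) := by
  intro P'
  set A : List V := (List.range' 1 (k - 1)).map p with hA
  set B : List V := (List.range' l (s - l + 1)).map p with hB
  set C : List V := (List.range' k (l - k)).map p with hC
  have hAlast : A.getLast? = some (p (k - 1)) := by
    rw [hA, getLast?_map_range'_aux p 1 (k - 1) (by omega)]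
    congr 2; omega
  have hBhead : B.head? = some (p l) := head?_map_range'_aux p l _ (by omega)
  have hBlast : B.getLast? = some (p s) := by
    rw [hB, getLast?_map_range'_aux p l (s - l + 1) (by omega)]
    congr 2; omega
  have hChead : C.head? = some (p k) := head?_map_range'_aux p k _ (by omega)
  have hClast : C.getLast? = some (p (l - 1)) := by
    rw [hC, getLast?_map_range'_aux p k (l - k) (by omega)]
    congr 2; omega
  have hAchain : A.Chain' E := chain'_map_range'_aux E p 1 (k - 1)
    (fun i hi hi' => hpath i hi (by omega))
  have hBchain : B.Chain' E := chain'_map_range'_aux E p l (s - l + 1)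
    (fun i hi hi' => hpath i (by omega) (by omega))
  have hCchain : C.Chain' E := chain'_map_range'_aux E p k (l - k)
    (fun i hi hi' => hpath i (by omega) (by omega))
  refine ⟨?_, ?_, ?_, ?_⟩
  · refine List.IsChain.append (List.IsChain.append hAchain hBchain ?_) hCchain ?_
    · intro x hx y hy
      rw [hAlast, Option.mem_def, Option.some_inj] at hx
      rw [hBhead, Option.mem_def, Option.some_inj] at hy
      subst hx; subst hy; exact h2
    · intro x hx y hy
      rw [List.getLast?_append, hBlast] at hx
      rw [hChead, Option.mem_def, Option.some_inj] at hy
      simp only [Option.some_or, Option.mem_def, Option.some_inj] at hx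
      subst hx; subst hy; exact h1
  · have hperm : P'.Perm (A ++ (C ++ B)) := by
      have hP : P' = A ++ (B ++ C) := by simp [P', hA, hB, hC, List.append_assoc]
      rw [hP]
      exact (List.perm_append_comm).append_left A
    refine hperm.trans ?_
    have : A ++ (C ++ B) = (List.range' 1 (k - 1) ++ (List.range' k (l - k) ++
        List.range' l (s - l + 1))).map p := by
      simp [hA, hB, hC]
    rw [this]
    have h3 : List.range' k (l - k) ++ List.range' l (s - l + 1) = List.range' k (s - k + 1) := by
      have := List.range'_append (s := k) (m := l - k) (n := s - l + 1) (step := 1)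
      rw [show k + 1 * (l - k) = l by omega] at this
      rw [this]; congr 1; omega
    rw [h3]
    have h4 : List.range' 1 (k - 1) ++ List.range' k (s - k + 1) = List.range' 1 s := by
      have := List.range'_append (s := 1) (m := k - 1) (n := s - k + 1) (step := 1)
      rw [show 1 + 1 * (k - 1) = k by omega] at this
      rw [this]; congr 1; omega
    rw [h4]
  · have hAhead : A.head? = some (p 1) := head?_map_range'_aux p 1 _ (by omega)
    show ((A ++ B) ++ C).head? = _
    rw [List.head?_append, List.head?_append, hAhead]
    rfl
  · show ((A ++ B) ++ C).getLast? = _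
    rw [List.getLast?_append, hClast]
    rfl
end

section
/- Let p_ℓ = (log n + (q−1) log log n − ω(n))/n with ω(n) = (1/2) log log log n, and for integer k with q−1 ≤ k ≤ 3 log n / log log n let v_k = e^{2ω(n)} (log n)^{k−q+1} / (k−1)!. Then with probability 1 − o(1) as n → ∞, the random digraph D_{n,p} with p = p_ℓ (each of the n(n−1) possible arcs present independently with probability p) has, for every such k simultaneously, at most v_k vertices of in-degree at most k, and at most v_k vertices of out-degree at most k. -/
open MeasureTheory Filter
open scoped ENNReal

/-- The random digraph `D_{n,p}`: each of the `n(n-1)` potential arcs (ordered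
pairs of distinct vertices) is present independently with probability `p`
(clipped to `[0,1]`). Coordinates at loops are irrelevant. -/
noncomputable def digraphMeasure (n : ℕ) (x : ℝ) : Measure ((Fin n × Fin n) → Bool) :=
  Measure.pi fun _ => (PMF.bernoulli (min (Real.toNNReal x) 1) (min_le_right _ _)).toMeasure

def inDeg {n : ℕ} (ω : (Fin n × Fin n) → Bool) (v : Fin n) : ℕ :=
  (Finset.univ.filter fun u => u ≠ v ∧ ω (u, v) = true).card

def outDeg {n : ℕ} (ω : (Fin n × Fin n) → Bool) (v : Fin n) : ℕ :=
  (Finset.univ.filter fun u => u ≠ v ∧ ω (v, u) = true).card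

noncomputable def smallomega (n : ℕ) : ℝ := (1 / 2) * Real.log (Real.log (Real.log n))

noncomputable def pEll (q n : ℕ) : ℝ :=
  (Real.log n + ((q : ℝ) - 1) * Real.log (Real.log n) - smallomega n) / n

noncomputable def vkBound (q n k : ℕ) : ℝ :=
  Real.exp (2 * smallomega n) * Real.log n ^ (k - q + 1) / (Nat.factorial (k - 1))

namespace Stmt6Aux
open Finset

abbrev Om (n : ℕ) := (Fin n × Fin n) → Bool

lemma measSet {n : ℕ} (s : Set (Om n)) : MeasurableSet s := (Set.toFinite s).measurableSet

lemma measFun {n : ℕ} {β : Type*} [MeasurableSpace β] (f : Om n → β) : Measurable f :=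
  fun _ _ => measSet _

instance {n : ℕ} {x : ℝ} : IsProbabilityMeasure (digraphMeasure n x) := by
  unfold digraphMeasure; infer_instance

noncomputable def bmx (x : ℝ) : Measure Bool :=
  (PMF.bernoulli (min (Real.toNNReal x) 1) (min_le_right _ _)).toMeasure

lemma digraph_eq (n : ℕ) (x : ℝ) :
    digraphMeasure n x = Measure.pi fun _ : Fin n × Fin n => bmx x := rfl

instance {x : ℝ} : IsProbabilityMeasure (bmx x) := by unfold bmx; infer_instance

lemma bmx_singleton (x : ℝ) (b : Bool) :
    bmx x {b} = cond b (min (ENNReal.ofReal x) 1) (1 - min (ENNReal.ofReal x) 1) := by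
  rw [bmx, PMF.toMeasure_apply_singleton _ _ (measurableSet_singleton _), PMF.bernoulli_apply]
  cases b <;> simp [ENNReal.ofReal, ENNReal.coe_sub]

lemma bmx_univ (x : ℝ) : bmx x Set.univ = 1 := measure_univ

variable {n : ℕ}

def colMap (d : Bool) (v u : Fin n) : Fin n × Fin n := if d then (u, v) else (v, u)

def prj (d : Bool) (e : Fin n × Fin n) : Fin n := if d then e.1 else e.2

@[simp] lemma prj_colMap (d : Bool) (v u : Fin n) : prj d (colMap d v u) = u := by
  cases d <;> simp [prj, colMap]

lemma colMap_inj (d : Bool) (v : Fin n) : Function.Injective (colMap d v) := by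
  intro a b h
  cases d <;> simpa [colMap, Prod.ext_iff] using h

/-- the "column" of v in direction d -/
def colSet (d : Bool) (v : Fin n) : Finset (Fin n × Fin n) :=
  (Finset.univ.erase v).image (colMap d v)

lemma disjoint_colSet {d : Bool} {v v' : Fin n} (h : v ≠ v') :
    Disjoint (colSet d v) (colSet d v') := by
  rw [Finset.disjoint_left]
  intro e he he'
  simp only [colSet, mem_image] at he he'
  obtain ⟨u, _, rfl⟩ := he
  obtain ⟨u', _, h2⟩ := he'
  cases d <;> simp [colMap, Prod.ext_iff] at h2 <;> tauto

def Cyl (d : Bool) (v : Fin n) (A : Finset (Fin n)) : Set (Om n) :=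
  {ω | ∀ u ∈ Finset.univ.erase v, ω (colMap d v u) = decide (u ∈ A)}

lemma mem_Cyl_iff {d : Bool} {v : Fin n} {A : Finset (Fin n)} (hA : A ⊆ Finset.univ.erase v)
    {ω : Om n} :
    ω ∈ Cyl d v A ↔ (Finset.univ.erase v).filter (fun u => ω (colMap d v u) = true) = A := by
  constructor
  · intro h
    ext u
    simp only [mem_filter]
    constructor
    · rintro ⟨hu, hu2⟩
      have := h u hu
      rw [hu2] at this
      simpa using this.symm
    · intro hu
      refine ⟨hA hu, ?_⟩
      rw [h u (hA hu)]
      simp [hu]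
  · rintro rfl
    intro u hu
    by_cases h : ω (colMap d v u) = true <;> simp [h, hu]

lemma Cyl_eq_pi (d : Bool) (v : Fin n) (A : Finset (Fin n)) :
    Cyl d v A = Set.univ.pi (fun e => if e ∈ colSet d v then {decide (prj d e ∈ A)} else Set.univ) := by
  ext ω
  simp only [Cyl, Set.mem_setOf_eq, Set.mem_pi, Set.mem_univ, forall_true_left]
  constructor
  · intro h e
    by_cases he : e ∈ colSet d v
    · simp only [he, if_true]
      obtain ⟨u, hu, rfl⟩ := Finset.mem_image.mp he
      rw [h u hu]
      simp
    · simp [he]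
  · intro h u hu
    have he : colMap d v u ∈ colSet d v := Finset.mem_image_of_mem _ hu
    have := h (colMap d v u)
    rw [if_pos he] at this
    simpa using this

variable {x : ℝ}

lemma measure_pi_set (x : ℝ) (s : ∀ _ : Fin n × Fin n, Set Bool) :
    digraphMeasure n x (Set.univ.pi s) = ∏ e, bmx x (s e) := by
  rw [digraph_eq]; exact MeasureTheory.Measure.pi_pi _ _

/-- single-column product -/
lemma prod_colSet (x : ℝ) (d : Bool) (v : Fin n) (A : Finset (Fin n))
    (hA : A ⊆ Finset.univ.erase v) :
    ∏ e ∈ colSet d v, bmx x ({decide (prj d e ∈ A)} : Set Bool)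
      = (min (ENNReal.ofReal x) 1) ^ A.card
        * (1 - min (ENNReal.ofReal x) 1) ^ (n - 1 - A.card) := by
  rw [colSet, Finset.prod_image (fun a _ b _ h => colMap_inj d v h)]
  have h1 : ∀ u ∈ Finset.univ.erase v,
      bmx x ({decide (prj d (colMap d v u) ∈ A)} : Set Bool)
        = if u ∈ A then (min (ENNReal.ofReal x) 1) else (1 - min (ENNReal.ofReal x) 1) := by
    intro u _
    by_cases hu : u ∈ A <;> simp [hu, bmx_singleton]
  rw [Finset.prod_congr rfl h1, Finset.prod_ite, Finset.prod_const, Finset.prod_const]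
  have hfil : (Finset.univ.erase v).filter (· ∈ A) = A := by
    rw [Finset.filter_mem_eq_inter, Finset.inter_eq_right.mpr hA]
  have hcard : (Finset.univ.erase v).card = n - 1 := by
    rw [Finset.card_erase_of_mem (Finset.mem_univ v), Finset.card_univ, Fintype.card_fin]
  have hneg : ((Finset.univ.erase v).filter (fun u => ¬ u ∈ A)).card = n - 1 - A.card := by
    have := Finset.card_filter_add_card_filter_not (s := Finset.univ.erase v)
      (p := (· ∈ A))
    rw [hfil, hcard] at this
    omega
  rw [hfil, hneg]

lemma measure_Cyl (x : ℝ) (d : Bool) (v : Fin n) (A : Finset (Fin n))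
    (hA : A ⊆ Finset.univ.erase v) :
    digraphMeasure n x (Cyl d v A)
      = (min (ENNReal.ofReal x) 1) ^ A.card
        * (1 - min (ENNReal.ofReal x) 1) ^ (n - 1 - A.card) := by
  rw [Cyl_eq_pi, measure_pi_set]
  rw [← Finset.prod_subset (Finset.subset_univ (colSet d v))
    (fun e _ he => by simp only [he, if_neg, if_false]; exact bmx_univ x)]
  rw [← prod_colSet x d v A hA]
  exact Finset.prod_congr rfl fun e he => by rw [if_pos he]

lemma Cyl_inter_eq_pi {d : Bool} {v v' : Fin n} (h : v ≠ v') (A B : Finset (Fin n)) :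
    Cyl d v A ∩ Cyl d v' B = Set.univ.pi (fun e =>
      if e ∈ colSet d v then {decide (prj d e ∈ A)}
      else if e ∈ colSet d v' then {decide (prj d e ∈ B)} else Set.univ) := by
  ext ω
  simp only [Set.mem_inter_iff, Cyl, Set.mem_setOf_eq, Set.mem_pi, Set.mem_univ, forall_true_left]
  constructor
  · rintro ⟨h1, h2⟩ e
    by_cases he : e ∈ colSet d v
    · simp only [he, if_true]
      obtain ⟨u, hu, rfl⟩ := Finset.mem_image.mp he
      rw [h1 u hu]; simp
    · by_cases he' : e ∈ colSet d v'
      · simp only [he, if_false, he', if_true]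
        obtain ⟨u, hu, rfl⟩ := Finset.mem_image.mp he'
        rw [h2 u hu]; simp
      · simp [he, he']
  · intro hω
    constructor
    · intro u hu
      have he : colMap d v u ∈ colSet d v := Finset.mem_image_of_mem _ hu
      have := hω (colMap d v u)
      rw [if_pos he] at this
      simpa using this
    · intro u hu
      have he' : colMap d v' u ∈ colSet d v' := Finset.mem_image_of_mem _ hu
      have he : colMap d v' u ∉ colSet d v :=
        Finset.disjoint_right.mp (disjoint_colSet h) he'
      have := hω (colMap d v' u)
      rw [if_neg he, if_pos he'] at this
      simpa using this

lemma measure_Cyl_inter {d : Bool} {v v' : Fin n} (h : v ≠ v') {A B : Finset (Fin n)}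
    (hA : A ⊆ Finset.univ.erase v) (hB : B ⊆ Finset.univ.erase v') :
    digraphMeasure n x (Cyl d v A ∩ Cyl d v' B)
      = digraphMeasure n x (Cyl d v A) * digraphMeasure n x (Cyl d v' B) := by
  rw [Cyl_inter_eq_pi h, measure_pi_set]
  have hdisj := disjoint_colSet (d := d) h
  rw [← Finset.prod_subset (Finset.subset_univ (colSet d v ∪ colSet d v'))
    (fun e _ he => by
      rw [Finset.mem_union] at he
      push_neg at he
      simp only [he.1, he.2, if_false]
      exact bmx_univ x)]
  rw [Finset.prod_union hdisj]
  rw [measure_Cyl x d v A hA, measure_Cyl x d v' B hB]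
  rw [← prod_colSet x d v A hA, ← prod_colSet x d v' B hB]
  congr 1
  · exact Finset.prod_congr rfl fun e he => by rw [if_pos he]
  · exact Finset.prod_congr rfl fun e he => by
      rw [if_neg (Finset.disjoint_right.mp hdisj he), if_pos he]

def Adeg (d : Bool) (v : Fin n) (k : ℕ) : Set (Om n) :=
  {ω | ((Finset.univ.erase v).filter (fun u => ω (colMap d v u) = true)).card ≤ k}

def idx (v : Fin n) (k : ℕ) : Finset (Finset (Fin n)) :=
  (Finset.univ.erase v).powerset.filter (fun A => A.card ≤ k)

lemma Adeg_eq_biUnion (d : Bool) (v : Fin n) (k : ℕ) :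
    Adeg d v k = ⋃ A ∈ idx v k, Cyl d v A := by
  ext ω
  simp only [Adeg, Set.mem_setOf_eq, Set.mem_iUnion, idx, Finset.mem_filter,
    Finset.mem_powerset, exists_prop]
  constructor
  · intro hk
    refine ⟨(Finset.univ.erase v).filter (fun u => ω (colMap d v u) = true),
      ⟨Finset.filter_subset _ _, hk⟩, ?_⟩
    rw [mem_Cyl_iff (Finset.filter_subset _ _)]
  · rintro ⟨A, ⟨hA, hAk⟩, hω⟩
    rw [mem_Cyl_iff hA] at hω
    rw [hω]; exact hAk

noncomputable def rE (n k : ℕ) (x : ℝ) : ℝ≥0∞ :=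
  ∑ j ∈ Finset.range (k+1), ((n-1).choose j : ℝ≥0∞)
    * (min (ENNReal.ofReal x) 1) ^ j * (1 - min (ENNReal.ofReal x) 1) ^ (n - 1 - j)

lemma sum_idx_measure (x : ℝ) (d : Bool) (v : Fin n) (k : ℕ) :
    ∑ A ∈ idx v k, digraphMeasure n x (Cyl d v A) = rE n k x := by
  have hidx : idx v k = (Finset.range (k+1)).biUnion
      (fun j => (Finset.univ.erase v).powersetCard j) := by
    ext A
    simp only [idx, Finset.mem_filter, Finset.mem_powerset, Finset.mem_biUnion,
      Finset.mem_range, Finset.mem_powersetCard]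
    constructor
    · rintro ⟨h1, h2⟩; exact ⟨A.card, by omega, h1, rfl⟩
    · rintro ⟨j, hj, h1, rfl⟩; exact ⟨h1, by omega⟩
  rw [hidx, Finset.sum_biUnion]
  · apply Finset.sum_congr rfl
    intro j hj
    have : ∀ A ∈ (Finset.univ.erase v).powersetCard j,
        digraphMeasure n x (Cyl d v A)
          = (min (ENNReal.ofReal x) 1) ^ j * (1 - min (ENNReal.ofReal x) 1) ^ (n - 1 - j) := by
      intro A hA
      rw [Finset.mem_powersetCard] at hA
      rw [measure_Cyl x d v A hA.1, hA.2]
    rw [Finset.sum_congr rfl this, Finset.sum_const, Finset.card_powersetCard,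
      Finset.card_erase_of_mem (Finset.mem_univ v), Finset.card_univ, Fintype.card_fin,
      nsmul_eq_mul, mul_assoc]
  · intro a _ b _ hab
    simp only [Finset.disjoint_left, Finset.mem_powersetCard]
    rintro A ⟨_, rfl⟩ ⟨_, h2⟩
    exact hab h2

lemma pairwise_disjoint_Cyl (d : Bool) (v : Fin n) (k : ℕ) :
    Set.PairwiseDisjoint (idx v k : Set (Finset (Fin n))) (Cyl d v) := by
  intro A hA B hB hAB
  simp only [idx, Finset.coe_filter, Set.mem_setOf_eq, Finset.mem_powerset] at hA hB
  rw [Function.onFun, Set.disjoint_left]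
  intro ω h1 h2
  rw [mem_Cyl_iff hA.1] at h1
  rw [mem_Cyl_iff hB.1] at h2
  exact hAB (h1.symm.trans h2)

lemma measure_Adeg (x : ℝ) (d : Bool) (v : Fin n) (k : ℕ) :
    digraphMeasure n x (Adeg d v k) = rE n k x := by
  rw [Adeg_eq_biUnion, measure_biUnion_finset (pairwise_disjoint_Cyl d v k)
    (fun A _ => measSet _)]
  exact sum_idx_measure x d v k

set_option maxHeartbeats 800000 in
lemma measure_Adeg_inter {d : Bool} {v v' : Fin n} (h : v ≠ v') (k : ℕ) :
    digraphMeasure n x (Adeg d v k ∩ Adeg d v' k) = rE n k x * rE n k x := by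
  have hset : Adeg d v k ∩ Adeg d v' k
      = ⋃ p ∈ (idx v k) ×ˢ (idx v' k),
          Cyl d v (Prod.fst p) ∩ Cyl d v' (Prod.snd p) := by
    rw [Adeg_eq_biUnion (v := v), Adeg_eq_biUnion (v := v')]
    ext ω
    simp only [Set.mem_inter_iff, Set.mem_iUnion, exists_prop, Finset.mem_product]
    constructor
    · rintro ⟨⟨A, hA, h1⟩, ⟨B, hB, h2⟩⟩
      exact ⟨(A, B), ⟨hA, hB⟩, h1, h2⟩
    · rintro ⟨⟨A, B⟩, ⟨hA, hB⟩, h1, h2⟩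
      exact ⟨⟨A, hA, h1⟩, ⟨B, hB, h2⟩⟩
  rw [hset, measure_biUnion_finset ?_ (fun _ _ => measSet _)]
  · rw [Finset.sum_product]
    have : ∀ A ∈ idx v k, ∀ B ∈ idx v' k,
        digraphMeasure n x (Cyl d v A ∩ Cyl d v' B)
          = digraphMeasure n x (Cyl d v A) * digraphMeasure n x (Cyl d v' B) := by
      intro A hA B hB
      simp only [idx, Finset.mem_filter, Finset.mem_powerset] at hA hB
      exact measure_Cyl_inter h hA.1 hB.1
    calc ∑ A ∈ idx v k, ∑ B ∈ idx v' k, digraphMeasure n x (Cyl d v A ∩ Cyl d v' B)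
        = ∑ A ∈ idx v k, ∑ B ∈ idx v' k,
            digraphMeasure n x (Cyl d v A) * digraphMeasure n x (Cyl d v' B) := by
          exact Finset.sum_congr rfl fun A hA => Finset.sum_congr rfl fun B hB => this A hA B hB
      _ = (∑ A ∈ idx v k, digraphMeasure n x (Cyl d v A))
            * (∑ B ∈ idx v' k, digraphMeasure n x (Cyl d v' B)) := by
          rw [Finset.sum_mul_sum]
      _ = rE n k x * rE n k x := by rw [sum_idx_measure, sum_idx_measure]
  · intro p hp p' hp' hpp
    simp only [Finset.mem_coe, Finset.mem_product, idx, Finset.mem_filter,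
      Finset.mem_powerset] at hp hp'
    rw [Function.onFun, Set.disjoint_left]
    rintro ω ⟨h1, h2⟩ ⟨h1', h2'⟩
    rw [mem_Cyl_iff hp.1.1] at h1
    rw [mem_Cyl_iff hp'.1.1] at h1'
    rw [mem_Cyl_iff hp.2.1] at h2
    rw [mem_Cyl_iff hp'.2.1] at h2'
    exact hpp (Prod.ext (h1.symm.trans h1') (h2.symm.trans h2'))

def Xc (d : Bool) (k : ℕ) (ω : Om n) : ℕ :=
  (Finset.univ.filter fun v =>
    ((Finset.univ.erase v).filter (fun u => ω (colMap d v u) = true)).card ≤ k).card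

lemma Xc_cast (d : Bool) (k : ℕ) (ω : Om n) :
    (Xc d k ω : ℝ≥0∞) = ∑ v : Fin n, (Adeg d v k).indicator (fun _ => (1:ℝ≥0∞)) ω := by
  rw [Xc, Finset.card_filter, Nat.cast_sum]
  apply Finset.sum_congr rfl
  intro v _
  by_cases h : ω ∈ Adeg d v k
  · rw [Set.indicator_of_mem h]
    have h' : (#(Finset.filter (fun u => ω (colMap d v u) = true) (Finset.univ.erase v)) ≤ k) := h
    simp [h']
  · rw [Set.indicator_of_notMem h]
    have h' : ¬(#(Finset.filter (fun u => ω (colMap d v u) = true) (Finset.univ.erase v)) ≤ k) := h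
    simp [h']

lemma lintegral_Xc_sq (d : Bool) (k : ℕ) :
    ∫⁻ ω, ((Xc d k ω : ℝ≥0∞))^2 ∂(digraphMeasure n x)
      ≤ n * rE n k x + (n * rE n k x)^2 := by
  have hsq : ∀ ω : Om n, ((Xc d k ω : ℝ≥0∞))^2
      = ∑ v : Fin n, ∑ w : Fin n,
          (Adeg d v k ∩ Adeg d w k).indicator (fun _ => (1:ℝ≥0∞)) ω := by
    intro ω
    rw [sq, Xc_cast, Finset.sum_mul_sum]
    apply Finset.sum_congr rfl; intro v _
    apply Finset.sum_congr rfl; intro w _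
    by_cases h1 : ω ∈ Adeg d v k <;> by_cases h2 : ω ∈ Adeg d w k <;>
      simp [Set.indicator_apply, h1, h2]
  calc ∫⁻ ω, ((Xc d k ω : ℝ≥0∞))^2 ∂(digraphMeasure n x)
      = ∑ v : Fin n, ∑ w : Fin n, digraphMeasure n x (Adeg d v k ∩ Adeg d w k) := by
        simp_rw [hsq]
        rw [lintegral_finset_sum _ (fun v _ => measFun _)]
        apply Finset.sum_congr rfl; intro v _
        rw [lintegral_finset_sum _ (fun w _ => measFun _)]
        apply Finset.sum_congr rfl; intro w _
        rw [lintegral_indicator (measSet _)]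
        simp
    _ ≤ ∑ _v : Fin n, ∑ w : Fin n,
          ((if _v = w then rE n k x else 0) + (rE n k x)^2) := by
        apply Finset.sum_le_sum; intro v _
        apply Finset.sum_le_sum; intro w _
        by_cases hvw : v = w
        · subst hvw
          rw [if_pos rfl, Set.inter_self, measure_Adeg]
          exact le_add_of_le_of_nonneg le_rfl zero_le
        · rw [if_neg hvw, measure_Adeg_inter hvw, zero_add, sq]
    _ = n * rE n k x + (n * rE n k x)^2 := by
        have : ∀ v : Fin n, ∑ w : Fin n,
            ((if v = w then rE n k x else 0) + (rE n k x)^2)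
            = rE n k x + n * (rE n k x)^2 := by
          intro v
          rw [Finset.sum_add_distrib, Finset.sum_ite_eq, if_pos (Finset.mem_univ v),
            Finset.sum_const, Finset.card_univ, Fintype.card_fin, nsmul_eq_mul]
        rw [Finset.sum_congr rfl (fun v _ => this v), Finset.sum_const, Finset.card_univ,
          Fintype.card_fin, nsmul_eq_mul, mul_add, mul_pow]
        ring

lemma markov_Xc (d : Bool) (k : ℕ) (t : ℝ) (ht : 0 < t) :
    digraphMeasure n x {ω | t < (Xc d k ω : ℝ)}
      ≤ (n * rE n k x + (n * rE n k x)^2) / (ENNReal.ofReal t)^2 := by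
  have h1 : {ω : Om n | t < (Xc d k ω : ℝ)}
      ⊆ {ω : Om n | (ENNReal.ofReal t)^2 ≤ ((Xc d k ω : ℝ≥0∞))^2} := by
    intro ω hω
    simp only [Set.mem_setOf_eq] at *
    have h2 : ENNReal.ofReal t ≤ (Xc d k ω : ℝ≥0∞) := by
      rw [← ENNReal.ofReal_natCast]
      exact ENNReal.ofReal_le_ofReal hω.le
    exact pow_le_pow_left' h2 2
  refine le_trans (measure_mono h1) ?_
  rw [ENNReal.le_div_iff_mul_le
    (Or.inl (pow_ne_zero 2 (ENNReal.ofReal_pos.mpr ht).ne'))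
    (Or.inl (ENNReal.pow_ne_top ENNReal.ofReal_ne_top))]
  rw [mul_comm]
  exact le_trans
    (mul_meas_ge_le_lintegral₀ (measFun (fun ω => ((Xc d k ω : ℝ≥0∞))^2)).aemeasurable _)
    (lintegral_Xc_sq d k)

noncomputable def rReal (n k : ℕ) (x : ℝ) : ℝ :=
  ∑ j ∈ Finset.range (k+1), ((n-1).choose j : ℝ) * x^j * (1-x)^(n-1-j)

lemma rReal_nonneg {n k : ℕ} {x : ℝ} (h0 : 0 ≤ x) (h1 : x ≤ 1) : 0 ≤ rReal n k x := by
  apply Finset.sum_nonneg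
  intro j _
  have : (0:ℝ) ≤ 1 - x := by linarith
  positivity

lemma rE_eq {x : ℝ} (h0 : 0 ≤ x) (h1 : x ≤ 1) (k : ℕ) :
    rE n k x = ENNReal.ofReal (rReal n k x) := by
  have hmin : min (ENNReal.ofReal x) 1 = ENNReal.ofReal x :=
    min_eq_left (ENNReal.ofReal_le_one.mpr h1)
  have hq : (1:ℝ≥0∞) - ENNReal.ofReal x = ENNReal.ofReal (1-x) := by
    rw [ENNReal.ofReal_sub _ h0, ENNReal.ofReal_one]
  rw [rE, rReal, ENNReal.ofReal_sum_of_nonneg]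
  · apply Finset.sum_congr rfl
    intro j _
    rw [hmin, hq, ENNReal.ofReal_mul (by positivity), ENNReal.ofReal_mul (by positivity),
      ENNReal.ofReal_natCast, ENNReal.ofReal_pow h0, ENNReal.ofReal_pow (by linarith)]
  · intro j _
    have : (0:ℝ) ≤ 1 - x := by linarith
    positivity

lemma markov_real {x : ℝ} (h0 : 0 ≤ x) (h1 : x ≤ 1) (d : Bool) (k : ℕ) (t : ℝ) (ht : 0 < t) :
    digraphMeasure n x {ω | t < (Xc d k ω : ℝ)}
      ≤ ENNReal.ofReal ((n * rReal n k x + (n * rReal n k x)^2) / t^2) := by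
  refine le_trans (markov_Xc d k t ht) ?_
  rw [rE_eq h0 h1]
  have hr := rReal_nonneg (n := n) (k := k) h0 h1
  rw [ENNReal.ofReal_div_of_pos (by positivity)]
  rw [ENNReal.ofReal_add (by positivity) (by positivity), ENNReal.ofReal_pow (by positivity),
    ENNReal.ofReal_pow ht.le, ENNReal.ofReal_mul (by positivity)]
  rw [ENNReal.ofReal_natCast]

noncomputable def Kk (n : ℕ) : ℕ := Nat.floor (3 * Real.log n / Real.log (Real.log n))

def good (q n : ℕ) : Set (Om n) :=
  {ω | ∀ k : ℕ, q - 1 ≤ k → (k : ℝ) ≤ 3 * Real.log n / Real.log (Real.log n) →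
    ((Finset.univ.filter fun v : Fin n => inDeg ω v ≤ k).card : ℝ) ≤ vkBound q n k ∧
    ((Finset.univ.filter fun v : Fin n => outDeg ω v ≤ k).card : ℝ) ≤ vkBound q n k}

lemma inDeg_eq (ω : Om n) (v : Fin n) :
    inDeg ω v = ((Finset.univ.erase v).filter (fun u => ω (colMap true v u) = true)).card := by
  unfold inDeg
  congr 1
  ext u
  simp only [Finset.mem_filter, Finset.mem_erase, Finset.mem_univ, colMap, if_true, true_and]
  tauto

lemma outDeg_eq (ω : Om n) (v : Fin n) :
    outDeg ω v = ((Finset.univ.erase v).filter (fun u => ω (colMap false v u) = true)).card := by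
  unfold outDeg
  congr 1
  ext u
  simp only [Finset.mem_filter, Finset.mem_erase, Finset.mem_univ, colMap, if_false, true_and,
    Bool.false_eq_true]
  tauto

lemma card_in (ω : Om n) (k : ℕ) :
    (Finset.univ.filter fun v : Fin n => inDeg ω v ≤ k).card = Xc true k ω := by
  unfold Xc
  congr 1
  apply Finset.filter_congr
  intro v _
  rw [inDeg_eq]

lemma card_out (ω : Om n) (k : ℕ) :
    (Finset.univ.filter fun v : Fin n => outDeg ω v ≤ k).card = Xc false k ω := by
  unfold Xc
  congr 1
  apply Finset.filter_congr
  intro v _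
  rw [outDeg_eq]

lemma good_compl_subset (q n : ℕ) :
    (good q n)ᶜ ⊆ ⋃ k ∈ Finset.Icc (q-1) (Kk n),
      ({ω : Om n | vkBound q n k < (Xc true k ω : ℝ)}
        ∪ {ω : Om n | vkBound q n k < (Xc false k ω : ℝ)}) := by
  intro ω hω
  simp only [good, Set.mem_compl_iff, Set.mem_setOf_eq, not_forall] at hω
  obtain ⟨k, hk1, hk2, hk3⟩ := hω
  simp only [Set.mem_iUnion, exists_prop]
  refine ⟨k, Finset.mem_Icc.mpr ⟨hk1, Nat.le_floor hk2⟩, ?_⟩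
  rw [not_and_or] at hk3
  rcases hk3 with h | h
  · left
    rw [Set.mem_setOf_eq, ← card_in]
    exact lt_of_not_ge h
  · right
    rw [Set.mem_setOf_eq, ← card_out]
    exact lt_of_not_ge h

noncomputable def Sb (q n : ℕ) : ℝ :=
  ∑ k ∈ Finset.Icc (q-1) (Kk n),
    2 * ((n * rReal n k (pEll q n) + (n * rReal n k (pEll q n))^2) / (vkBound q n k)^2)

lemma measure_good_compl_le (q n : ℕ) (hx0 : 0 ≤ pEll q n) (hx1 : pEll q n ≤ 1)
    (hv : ∀ k ∈ Finset.Icc (q-1) (Kk n), 0 < vkBound q n k) :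
    digraphMeasure n (pEll q n) ((good q n)ᶜ) ≤ ENNReal.ofReal (Sb q n) := by
  set x := pEll q n
  refine le_trans (measure_mono (good_compl_subset q n)) ?_
  refine le_trans (measure_biUnion_finset_le _ _) ?_
  rw [Sb, ENNReal.ofReal_sum_of_nonneg]
  · apply Finset.sum_le_sum
    intro k hk
    have hvk := hv k hk
    have hr := rReal_nonneg (n := n) (k := k) hx0 hx1
    refine le_trans (measure_union_le _ _) ?_
    have hb := markov_real (n := n) hx0 hx1 true k _ hvk
    have hb' := markov_real (n := n) hx0 hx1 false k _ hvk
    calc digraphMeasure n x {ω : Om n | vkBound q n k < (Xc true k ω : ℝ)}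
          + digraphMeasure n x {ω : Om n | vkBound q n k < (Xc false k ω : ℝ)}
        ≤ ENNReal.ofReal ((n * rReal n k x + (n * rReal n k x)^2) / (vkBound q n k)^2)
          + ENNReal.ofReal ((n * rReal n k x + (n * rReal n k x)^2) / (vkBound q n k)^2) :=
          add_le_add hb hb'
      _ = ENNReal.ofReal (2 * ((n * rReal n k x + (n * rReal n k x)^2) / (vkBound q n k)^2)) := by
          rw [two_mul, ENNReal.ofReal_add (by positivity) (by positivity)]
  · intro k hk
    have hvk := hv k hk
    have hr := rReal_nonneg (n := n) (k := k) hx0 hx1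
    positivity

noncomputable def C0 (q : ℕ) : ℝ := 2 * Real.exp 1 * Real.exp (3*((q:ℝ)-1))

/-- bundle of basic real facts, under largeness hypotheses -/
lemma base (q n : ℕ) (hq : 1 ≤ q) (hn : (64:ℝ) ≤ n)
    (hM : 32 ≤ Real.log (Real.log n))
    (hqM : ((q:ℝ)+1) * Real.log (Real.log n) ≤ Real.log n) :
    1 ≤ Real.log n ∧
    Real.log (Real.log n) + 1 ≤ Real.log n ∧
    1 ≤ Real.log (Real.log (Real.log n)) ∧
    Real.log (Real.log (Real.log n)) + 1 ≤ Real.log (Real.log n) ∧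
    Real.exp (2 * smallomega n) = Real.log (Real.log n) ∧
    (0 ≤ smallomega n ∧ smallomega n ≤ Real.log (Real.log n) / 2) ∧
    Real.log n / 2 ≤ (n:ℝ) * pEll q n ∧
    (n:ℝ) * pEll q n ≤ 2 * Real.log n ∧
    (n:ℝ) * pEll q n = Real.log n + ((q:ℝ)-1) * Real.log (Real.log n) - smallomega n ∧
    4 * Real.log n ≤ (n:ℝ) ∧
    8 * Real.log n ^ 2 ≤ Real.log (Real.log n) * n ∧
    0 ≤ pEll q n ∧ pEll q n ≤ 1 := by
  have hn0 : (0:ℝ) < n := by linarith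
  set L := Real.log n with hLdef
  set M := Real.log L with hMdef
  set T := Real.log M with hTdef
  have he1 : Real.exp 1 < 3 := by
    have := Real.exp_one_lt_d9
    linarith
  have hL1 : 1 ≤ L := by
    rw [hLdef, Real.le_log_iff_exp_le hn0]
    linarith
  have hL0 : (0:ℝ) < L := by linarith
  have hM0 : (0:ℝ) < M := by linarith
  have hexpM : Real.exp M = L := Real.exp_log hL0
  have hML : M + 1 ≤ L := by
    calc M + 1 ≤ Real.exp M := Real.add_one_le_exp M
    _ = L := hexpM
  have hT1 : 1 ≤ T := by
    rw [hTdef, Real.le_log_iff_exp_le hM0]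
    linarith
  have hexpT : Real.exp T = M := Real.exp_log hM0
  have hTM : T + 1 ≤ M := by
    calc T + 1 ≤ Real.exp T := Real.add_one_le_exp T
    _ = M := hexpT
  have hw : smallomega n = T / 2 := by
    rw [smallomega, hTdef, hMdef, hLdef]; ring
  have he2w : Real.exp (2 * smallomega n) = M := by
    rw [hw]
    rw [show 2 * (T/2) = T by ring, hexpT]
  have hw0 : 0 ≤ smallomega n := by rw [hw]; linarith
  have hwM : smallomega n ≤ M / 2 := by rw [hw]; linarith
  -- sqrt bound : L ≤ 2 * sqrt n - 2
  have hs0 : (0:ℝ) < Real.sqrt n := Real.sqrt_pos.mpr hn0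
  have hs8 : (8:ℝ) ≤ Real.sqrt n := by
    have : (8:ℝ) = Real.sqrt 64 := by
      rw [show (64:ℝ) = 8^2 by norm_num, Real.sqrt_sq (by norm_num)]
    rw [this]
    exact Real.sqrt_le_sqrt hn
  have hsq : Real.sqrt n ^ 2 = (n:ℝ) := Real.sq_sqrt hn0.le
  have hLsqrt : L ≤ 2 * Real.sqrt n - 2 := by
    have h1 : Real.log (Real.sqrt n) ≤ Real.sqrt n - 1 := Real.log_le_sub_one_of_pos hs0
    have h2 : Real.log (Real.sqrt n) = L / 2 := by rw [hLdef, Real.log_sqrt hn0.le]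
    linarith [h1, h2.symm.le, h2.le]
  have h4L : 4 * L ≤ (n:ℝ) := by
    nlinarith [hsq, hs8, hLsqrt]
  have h8L2 : 8 * L^2 ≤ M * n := by
    have hL2 : L^2 ≤ 4 * n := by nlinarith [hLsqrt, hsq, hs0]
    nlinarith [hL2, hM, hL0]
  -- np
  have hq1 : (1:ℝ) ≤ q := by exact_mod_cast hq
  have hpEll : pEll q n = (L + ((q:ℝ)-1) * M - smallomega n) / n := by rw [pEll]
  have hnp : (n:ℝ) * pEll q n = L + ((q:ℝ)-1) * M - smallomega n := by
    rw [hpEll, mul_comm, div_mul_cancel₀ _ hn0.ne']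
  have hMq : ((q:ℝ)-1) * M ≤ L := by
    have h1 : ((q:ℝ)-1) * M ≤ ((q:ℝ)+1) * M :=
      mul_le_mul_of_nonneg_right (by linarith) hM0.le
    linarith
  have hnpu : (n:ℝ) * pEll q n ≤ 2 * L := by
    rw [hnp]; linarith [hMq, hw0]
  have hnpl : L / 2 ≤ (n:ℝ) * pEll q n := by
    rw [hnp]
    have : smallomega n ≤ L / 2 := by
      calc smallomega n ≤ M / 2 := hwM
      _ ≤ L / 2 := by linarith
    have h1 : 0 ≤ ((q:ℝ)-1) * M := mul_nonneg (by linarith) hM0.le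
    linarith
  have hp0 : 0 ≤ pEll q n := by
    rw [hpEll]
    apply div_nonneg _ hn0.le
    have := hnpl
    rw [hnp] at this
    linarith
  have hp1 : pEll q n ≤ 1 := by
    rw [hpEll, div_le_one hn0]
    have := hnpu
    rw [hnp] at this
    linarith
  exact ⟨hL1, hML, hT1, hTM, he2w, ⟨hw0, hwM⟩, hnpl, hnpu, hnp, h4L, h8L2, hp0, hp1⟩

lemma stepA (m k : ℕ) (p : ℝ) (hp0 : 0 ≤ p) (hp1 : p ≤ 1) (hkm : k ≤ m)
    (hstep : ∀ j : ℕ, j + 1 ≤ k → 2*((j:ℝ)+1) ≤ ((m:ℝ) - j) * p) :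
    (∑ j ∈ Finset.range (k+1), (m.choose j : ℝ) * p^j * (1-p)^(m-j))
      ≤ 2 * ((m.choose k : ℝ) * p^k * (1-p)^(m-k)) := by
  have h1p : (0:ℝ) ≤ 1 - p := by linarith
  have htermnn : ∀ j : ℕ, 0 ≤ (m.choose j : ℝ) * p^j * (1-p)^(m-j) := by
    intro j; positivity
  have hterm : ∀ j : ℕ, j + 1 ≤ k →
      (m.choose j : ℝ) * p^j * (1-p)^(m-j)
        ≤ 1/2 * ((m.choose (j+1) : ℝ) * p^(j+1) * (1-p)^(m-(j+1))) := by
    intro j hj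
    have hjm : j + 1 ≤ m := le_trans hj hkm
    have hcc : ((m.choose (j+1)) : ℝ) * ((j:ℝ)+1) = (m.choose j : ℝ) * ((m:ℝ) - j) := by
      have := Nat.choose_succ_right_eq m j
      have hcast : ((m.choose (j+1) * (j+1) : ℕ) : ℝ) = ((m.choose j * (m - j) : ℕ) : ℝ) := by
        exact_mod_cast congrArg (Nat.cast (R := ℝ)) this
      push_cast [Nat.cast_sub (by omega : j ≤ m)] at hcast
      convert hcast using 2 <;> push_cast <;> ring
    have hpow : (1-p)^(m-j) = (1-p)^(m-(j+1)) * (1-p) := by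
      rw [← pow_succ]
      congr 1
      omega
    set c0 := (m.choose j : ℝ)
    set c1 := (m.choose (j+1) : ℝ)
    have hc0 : (0:ℝ) ≤ c0 := Nat.cast_nonneg _
    have hkey : 2 * c0 * (1-p) ≤ c1 * p := by
      have h2 : c0 * (2*((j:ℝ)+1)) ≤ c0 * (((m:ℝ) - j) * p) :=
        mul_le_mul_of_nonneg_left (hstep j hj) hc0
      have h3 : c0 * (((m:ℝ) - j) * p) = c1 * p * ((j:ℝ)+1) := by
        rw [← mul_assoc, ← hcc]; ring
      have h4 : 2 * c0 * (1-p) * ((j:ℝ)+1) ≤ c1 * p * ((j:ℝ)+1) := by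
        have h5 : 2 * c0 * (1-p) * ((j:ℝ)+1) ≤ 2 * c0 * ((j:ℝ)+1) := by
          have : c0 * (1-p) ≤ c0 * 1 := mul_le_mul_of_nonneg_left (by linarith) hc0
          nlinarith [this]
        linarith [h2, h3.symm.le, h3.le, h5]
      have hj1 : (0:ℝ) < (j:ℝ)+1 := by positivity
      exact le_of_mul_le_mul_right h4 hj1
    rw [hpow, pow_succ]
    calc c0 * p^j * ((1-p)^(m-(j+1)) * (1-p))
        = (c0 * (1-p)) * (p^j * (1-p)^(m-(j+1))) := by ring
      _ ≤ (1/2 * (c1 * p)) * (p^j * (1-p)^(m-(j+1))) := by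
          apply mul_le_mul_of_nonneg_right _ (by positivity)
          linarith [hkey]
      _ = 1/2 * (c1 * (p^j * p) * (1-p)^(m-(j+1))) := by ring
  have hsum : ∀ i : ℕ, i ≤ k →
      (∑ j ∈ Finset.range (i+1), (m.choose j : ℝ) * p^j * (1-p)^(m-j))
        ≤ 2 * ((m.choose i : ℝ) * p^i * (1-p)^(m-i)) := by
    intro i
    induction i with
    | zero =>
      intro _
      rw [Finset.sum_range_one]
      linarith [htermnn 0]
    | succ i ih =>
      intro hik
      rw [Finset.sum_range_succ]
      have h1 := ih (by omega)
      have h2 := hterm i (by omega)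
      linarith [h1, h2]
  exact hsum k le_rfl

lemma fact_ineq (k : ℕ) : ((k+1) * (k-1).factorial : ℕ) ≤ 2 * k.factorial := by
  cases k with
  | zero => simp [Nat.factorial]
  | succ k =>
    simp only [Nat.add_sub_cancel, Nat.factorial_succ]
    calc (k+1+1) * k.factorial ≤ 2*(k+1) * k.factorial := by
          apply Nat.mul_le_mul_right; omega
      _ = 2 * ((k+1) * k.factorial) := by ring

set_option maxHeartbeats 1000000 in
lemma key_mu (q n k : ℕ) (hq : 1 ≤ q) (hn : (64:ℝ) ≤ n)
    (hM : 32 ≤ Real.log (Real.log n))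
    (hqM : ((q:ℝ)+1) * Real.log (Real.log n) ≤ Real.log n)
    (hk1 : q - 1 ≤ k) (hk2 : (k:ℝ) ≤ 3 * Real.log n / Real.log (Real.log n)) :
    (n:ℝ) * rReal n k (pEll q n)
      ≤ (2 * C0 q / ((k:ℝ)+1)) * Real.exp (-(smallomega n)) * vkBound q n k := by
  obtain ⟨hL1, hML, hT1, hTM, he2w, ⟨hw0, hwM⟩, hnpl, hnpu, hnp, h4L, h8L2, hp0, hp1⟩ :=
    base q n hq hn hM hqM
  set L := Real.log n with hLdef
  set M := Real.log L with hMdef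
  set p := pEll q n with hpdef
  set w := smallomega n with hwdef
  have hn0 : (0:ℝ) < n := by linarith
  have hL0 : (0:ℝ) < L := by linarith
  have hM0 : (0:ℝ) < M := by linarith
  have h1p : (0:ℝ) ≤ 1 - p := by linarith
  -- k bounds
  have hkM3L : (k:ℝ) * M ≤ 3 * L := by
    rw [← le_div_iff₀ hM0]; exact hk2
  have hkL : (k:ℝ) ≤ L := by
    nlinarith [hkM3L, hM, Nat.cast_nonneg (α := ℝ) k]
  have hkm : k ≤ n - 1 := by
    have h1 : (k:ℝ) ≤ ((n-1:ℕ):ℝ) := by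
      rw [Nat.cast_sub (by exact_mod_cast (by linarith : (1:ℝ) ≤ n))]
      push_cast
      linarith
    exact_mod_cast h1
  have hmcast : ((n-1:ℕ):ℝ) = (n:ℝ) - 1 := by
    rw [Nat.cast_sub (by exact_mod_cast (by linarith : (1:ℝ) ≤ n))]
    push_cast; ring
  -- step A application
  have hstep : ∀ j : ℕ, j + 1 ≤ k → 2*((j:ℝ)+1) ≤ (((n-1:ℕ):ℝ) - j) * p := by
    intro j hj
    have hjk : (j:ℝ) + 1 ≤ k := by exact_mod_cast hj
    have hjL : 2*((j:ℝ)+1) ≤ L/4 := by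
      have h32 : (k:ℝ)*32 ≤ 3*L := by
        have h := mul_le_mul_of_nonneg_left hM (Nat.cast_nonneg (α := ℝ) k)
        calc (k:ℝ)*32 = (k:ℝ)*(32:ℝ) := by ring
          _ ≤ (k:ℝ)*M := h
          _ ≤ 3*L := hkM3L
      have hk0 : (0:ℝ) ≤ k := Nat.cast_nonneg k
      linarith
    have hmj : (n:ℝ)/2 ≤ ((n-1:ℕ):ℝ) - j := by
      rw [hmcast]
      have : (j:ℝ) ≤ L := by linarith
      linarith
    have hpl : L/(2*(n:ℝ)) ≤ p := by
      rw [div_le_iff₀ (by positivity)]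
      nlinarith [hnpl]
    have : L/4 ≤ (((n-1:ℕ):ℝ) - j) * p :=
      calc L/4 = (n:ℝ)/2 * (L/(2*(n:ℝ))) := by field_simp; ring
        _ ≤ (((n-1:ℕ):ℝ) - j) * p := by
            apply mul_le_mul hmj hpl (by positivity) (by linarith [hmj])
    linarith
  have hA : rReal n k p ≤ 2 * (((n-1).choose k : ℝ) * p^k * (1-p)^(n-1-k)) :=
    stepA (n-1) k p hp0 hp1 hkm hstep
  set c := ((n-1).choose k : ℝ) with hcdef
  have hc0 : (0:ℝ) ≤ c := Nat.cast_nonneg _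
  have hkf0 : (0:ℝ) < (k.factorial : ℝ) := by exact_mod_cast k.factorial_pos
  -- choose bound
  have hchoose : c ≤ (n:ℝ)^k / k.factorial := by
    calc c ≤ ((n-1:ℕ):ℝ)^k / k.factorial := Nat.choose_le_pow_div k (n-1)
      _ ≤ (n:ℝ)^k / k.factorial := by
          apply (div_le_div_iff_of_pos_right hkf0).mpr
          apply pow_le_pow_left₀ (Nat.cast_nonneg _)
          rw [hmcast]; linarith
  -- exponential bound on (1-p)^(n-1-k)
  have hNcast : ((n-1-k:ℕ):ℝ) = (n:ℝ) - 1 - k := by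
    rw [Nat.cast_sub hkm, hmcast]
  have hexp_pow : (1-p)^(n-1-k) ≤ Real.exp (-(((n:ℝ)-1-k) * p)) := by
    have h1 : 1 - p ≤ Real.exp (-p) := by linarith [Real.add_one_le_exp (-p)]
    calc (1-p)^(n-1-k) ≤ Real.exp (-p) ^ (n-1-k) := pow_le_pow_left₀ h1p h1 _
      _ = Real.exp (((n-1-k:ℕ):ℝ) * (-p)) := (Real.exp_nat_mul (-p) _).symm
      _ = Real.exp (-(((n:ℝ)-1-k) * p)) := by rw [hNcast]; ring_nf
  have h1k : ((k:ℝ)+1)*p ≤ 1 := by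
    have h1 : M*((k:ℝ)+1) ≤ 4*L := by
      have he : M*((k:ℝ)+1) = (k:ℝ)*M + M := by ring
      rw [he]; linarith [hkM3L, hML]
    have h2 : M*((k:ℝ)+1) * ((n:ℝ)*p) ≤ 4*L*(2*L) := by
      apply mul_le_mul h1 hnpu (by linarith [hnpl, hL0]) (by linarith)
    have h3 : (((k:ℝ)+1)*p) * (M*(n:ℝ)) ≤ 1 * (M*(n:ℝ)) := by
      calc (((k:ℝ)+1)*p) * (M*(n:ℝ)) = M*((k:ℝ)+1) * ((n:ℝ)*p) := by ring
        _ ≤ 4*L*(2*L) := h2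
        _ = 8*L^2 := by ring
        _ ≤ M*(n:ℝ) := h8L2
        _ = 1 * (M*(n:ℝ)) := by ring
    exact le_of_mul_le_mul_right h3 (by positivity)
  have hexp_le : Real.exp (-(((n:ℝ)-1-k) * p)) ≤ Real.exp (-((n:ℝ)*p)) * Real.exp 1 := by
    rw [← Real.exp_add]
    apply Real.exp_le_exp.mpr
    have he : -(((n:ℝ)-1-k) * p) = -((n:ℝ)*p) + (((k:ℝ)+1)*p) := by ring
    rw [he]
    linarith [h1k]
  -- n * exp(-np) = exp w / L^(q-1)
  have hqc : ((q-1:ℕ):ℝ) = (q:ℝ)-1 := by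
    rw [Nat.cast_sub hq]; push_cast; ring
  have hexpL : Real.exp L = (n:ℝ) := Real.exp_log hn0
  have hexpM : Real.exp M = L := Real.exp_log hL0
  have hnexp : (n:ℝ) * Real.exp (-((n:ℝ)*p)) = Real.exp w / L^(q-1) := by
    rw [hnp]
    have h1 : -(L + ((q:ℝ)-1) * M - w) = w + (-L) + (-(((q-1:ℕ):ℝ)*M)) := by
      rw [hqc]; ring
    rw [h1, Real.exp_add, Real.exp_add, Real.exp_neg, Real.exp_neg, hexpL,
      Real.exp_nat_mul, hexpM]
    field_simp
  -- beta bound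
  have hnp0 : (0:ℝ) ≤ (n:ℝ)*p := by positivity
  have hbeta : ((n:ℝ)*p)^k ≤ L^k * Real.exp (3*((q:ℝ)-1)) := by
    have hy0 : (0:ℝ) ≤ ((q:ℝ)-1)*M/L := by
      have : (0:ℝ) ≤ (q:ℝ)-1 := by
        have : (1:ℝ) ≤ q := by exact_mod_cast hq
        linarith
      positivity
    have hgam : (n:ℝ)*p ≤ L * (1 + ((q:ℝ)-1)*M/L) := by
      rw [hnp]
      rw [mul_add, mul_one, mul_div_cancel₀ _ hL0.ne']
      linarith
    have h2 : ((n:ℝ)*p)^k ≤ (L * (1 + ((q:ℝ)-1)*M/L))^k := pow_le_pow_left₀ hnp0 hgam k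
    have h3 : (1 + ((q:ℝ)-1)*M/L)^k ≤ Real.exp ((k:ℝ) * (((q:ℝ)-1)*M/L)) := by
      calc (1 + ((q:ℝ)-1)*M/L)^k ≤ Real.exp (((q:ℝ)-1)*M/L) ^ k := by
            apply pow_le_pow_left₀ (by linarith)
            linarith [Real.add_one_le_exp (((q:ℝ)-1)*M/L)]
        _ = Real.exp ((k:ℝ) * (((q:ℝ)-1)*M/L)) := (Real.exp_nat_mul _ _).symm
    have h4 : (k:ℝ) * (((q:ℝ)-1)*M/L) ≤ 3*((q:ℝ)-1) := by
      rw [mul_div_assoc', div_le_iff₀ hL0]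
      have hq0 : (0:ℝ) ≤ (q:ℝ)-1 := by
        have : (1:ℝ) ≤ q := by exact_mod_cast hq
        linarith
      calc (k:ℝ) * (((q:ℝ)-1)*M) = ((q:ℝ)-1) * ((k:ℝ)*M) := by ring
        _ ≤ ((q:ℝ)-1) * (3*L) := mul_le_mul_of_nonneg_left hkM3L hq0
        _ = 3*((q:ℝ)-1)*L := by ring
    calc ((n:ℝ)*p)^k ≤ (L * (1 + ((q:ℝ)-1)*M/L))^k := h2
      _ = L^k * (1 + ((q:ℝ)-1)*M/L)^k := mul_pow _ _ _
      _ ≤ L^k * Real.exp ((k:ℝ) * (((q:ℝ)-1)*M/L)) := by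
          apply mul_le_mul_of_nonneg_left h3 (by positivity)
      _ ≤ L^k * Real.exp (3*((q:ℝ)-1)) := by
          apply mul_le_mul_of_nonneg_left (Real.exp_le_exp.mpr h4) (by positivity)
  -- power quotient
  have hLq0 : (0:ℝ) < L^(q-1) := by positivity
  have hLpow : L^k / L^(q-1) = L^(k-(q-1)) := (pow_sub₀ L hL0.ne' hk1).symm
  have hLpow2 : L^(k-(q-1)) ≤ L^(k-q+1) := pow_le_pow_right₀ hL1 (by omega)
  -- main chain
  have hfact : ((k:ℝ)+1) * ((k-1).factorial : ℝ) ≤ 2 * (k.factorial : ℝ) := by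
    have := fact_ineq k
    have h2 : (((k+1) * (k-1).factorial : ℕ):ℝ) ≤ ((2 * k.factorial : ℕ):ℝ) := by
      exact_mod_cast this
    push_cast at h2
    convert h2 using 2
  have hkf10 : (0:ℝ) < ((k-1).factorial : ℝ) := by exact_mod_cast (k-1).factorial_pos
  have hC0 : (0:ℝ) < C0 q := by rw [C0]; positivity
  calc (n:ℝ) * rReal n k p
      ≤ (n:ℝ) * (2 * (c * p^k * (1-p)^(n-1-k))) := mul_le_mul_of_nonneg_left hA hn0.le
    _ ≤ (n:ℝ) * (2 * (c * p^k * (Real.exp (-((n:ℝ)*p)) * Real.exp 1))) := by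
        apply mul_le_mul_of_nonneg_left _ hn0.le
        apply mul_le_mul_of_nonneg_left _ (by norm_num)
        apply mul_le_mul_of_nonneg_left _ (by positivity)
        exact le_trans hexp_pow hexp_le
    _ = 2 * Real.exp 1 * (c * p^k) * ((n:ℝ) * Real.exp (-((n:ℝ)*p))) := by ring
    _ = 2 * Real.exp 1 * (c * p^k) * (Real.exp w / L^(q-1)) := by rw [hnexp]
    _ ≤ 2 * Real.exp 1 * (((n:ℝ)^k / k.factorial) * p^k) * (Real.exp w / L^(q-1)) := by
        apply mul_le_mul_of_nonneg_right _ (by positivity)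
        apply mul_le_mul_of_nonneg_left _ (by positivity)
        apply mul_le_mul_of_nonneg_right hchoose (by positivity)
    _ = 2 * Real.exp 1 * (((n:ℝ)*p)^k / k.factorial) * (Real.exp w / L^(q-1)) := by
        rw [mul_pow]; ring
    _ ≤ 2 * Real.exp 1 * ((L^k * Real.exp (3*((q:ℝ)-1))) / k.factorial) * (Real.exp w / L^(q-1)) := by
        apply mul_le_mul_of_nonneg_right _ (by positivity)
        apply mul_le_mul_of_nonneg_left _ (by positivity)
        exact (div_le_div_iff_of_pos_right hkf0).mpr hbeta
    _ = C0 q * Real.exp w * (L^k / L^(q-1)) / k.factorial := by rw [C0]; ring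
    _ = C0 q * Real.exp w * L^(k-(q-1)) / k.factorial := by rw [hLpow]
    _ ≤ C0 q * Real.exp w * L^(k-q+1) / k.factorial := by
        apply (div_le_div_iff_of_pos_right hkf0).mpr
        apply mul_le_mul_of_nonneg_left hLpow2 (by positivity)
    _ ≤ (2 * C0 q / ((k:ℝ)+1)) * Real.exp (-w) * vkBound q n k := by
        rw [vkBound, ← hwdef, ← hLdef]
        have hew : Real.exp (-w) * Real.exp (2*w) = Real.exp w := by
          rw [← Real.exp_add]; ring_nf
        have hrhs : (2 * C0 q / ((k:ℝ)+1)) * Real.exp (-w)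
            * (Real.exp (2*w) * L ^ (k-q+1) / ((k-1).factorial : ℝ))
            = (C0 q * (Real.exp (-w) * Real.exp (2*w)) * L^(k-q+1))
              * (2 / (((k:ℝ)+1) * ((k-1).factorial : ℝ))) := by
          have hk10 : ((k:ℝ)+1) ≠ 0 := by positivity
          field_simp
        rw [hrhs, hew]
        have hlhs : C0 q * Real.exp w * L ^ (k-q+1) / (k.factorial : ℝ)
            = (C0 q * Real.exp w * L^(k-q+1)) * (1 / (k.factorial : ℝ)) := by ring
        rw [hlhs]
        apply mul_le_mul_of_nonneg_left _ (by positivity)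
        rw [div_le_div_iff₀ hkf0 (by positivity)]
        linarith [hfact]

lemma sumsq (m : ℕ) : ∑ j ∈ Finset.range m, (1/((j:ℝ)+1)^2) ≤ 2 := by
  have h : ∀ m : ℕ, ∑ j ∈ Finset.range (m+1), (1/((j:ℝ)+1)^2) ≤ 2 - 1/((m:ℝ)+1) := by
    intro m
    induction m with
    | zero => simp; norm_num
    | succ m ih =>
      rw [Finset.sum_range_succ]
      have hkey : 1/((m:ℝ)+2)^2 ≤ 1/((m:ℝ)+1) - 1/((m:ℝ)+2) := by
        have h1 : 1/((m:ℝ)+1) - 1/((m:ℝ)+2) = 1/(((m:ℝ)+1)*((m:ℝ)+2)) := by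
          field_simp
          ring
        rw [h1]
        apply one_div_le_one_div_of_le (by positivity)
        nlinarith [Nat.cast_nonneg (α := ℝ) m]
      push_cast
      push_cast at ih
      have e : ((m:ℝ)+1+1) = (m:ℝ)+2 := by ring
      rw [e]
      linarith [ih, hkey]
  cases m with
  | zero => simp
  | succ m =>
    have h2 := h m
    have : (0:ℝ) < (m:ℝ)+1 := by positivity
    have h3 : (0:ℝ) ≤ 1/((m:ℝ)+1) := by positivity
    linarith

lemma key_v (q n k : ℕ) (hq : 1 ≤ q) (hn : (64:ℝ) ≤ n)
    (hM : 32 ≤ Real.log (Real.log n))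
    (hqM : ((q:ℝ)+1) * Real.log (Real.log n) ≤ Real.log n)
    (hk1 : q - 1 ≤ k) (hk2 : (k:ℝ) ≤ 3 * Real.log n / Real.log (Real.log n)) :
    Real.exp (2 * smallomega n) * Real.log n / ((q-1).factorial : ℝ) ≤ vkBound q n k := by
  have hn0 : (0:ℝ) < n := by linarith
  set L := Real.log n with hLdef
  set M := Real.log L with hMdef
  have hL1 : 1 ≤ L := by
    rw [hLdef, Real.le_log_iff_exp_le hn0]
    have := Real.exp_one_lt_d9
    linarith
  have hL0 : (0:ℝ) < L := by linarith
  have hM0 : (0:ℝ) < M := by linarith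
  rw [vkBound, ← hLdef]
  rw [div_le_div_iff₀ (by positivity) (by positivity)]
  rw [mul_assoc, mul_assoc]
  apply mul_le_mul_of_nonneg_left _ (Real.exp_pos _).le
  -- goal : L * (k-1)! ≤ L^(k-q+1) * (q-1)!
  have main : ∀ k' : ℕ, q ≤ k' → (k':ℝ) ≤ 3 * L / M →
      L * ((k'-1).factorial : ℝ) ≤ L^(k'-q+1) * ((q-1).factorial : ℝ) := by
    intro k' hq'
    induction k', hq' using Nat.le_induction with
    | base =>
      intro _
      have h : q - q + 1 = 1 := by omega
      rw [h, pow_one]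
    | succ k' hk' ih =>
      intro hk'2
      have hkM : (k':ℝ) ≤ 3 * L / M := by
        have : (k':ℝ) ≤ (k':ℝ)+1 := by linarith
        exact le_trans this (by exact_mod_cast hk'2)
      have hIH := ih hkM
      have hkL : (k':ℝ) ≤ L := by
        have h1 : (k':ℝ) * M ≤ 3 * L := by
          rw [← le_div_iff₀ hM0]; exact hkM
        nlinarith [hM, Nat.cast_nonneg (α := ℝ) k', hL0]
      have he : (k'+1) - q + 1 = (k' - q + 1) + 1 := by omega
      have hf : ((k'+1-1).factorial : ℝ) = (k':ℝ) * ((k'-1).factorial : ℝ) := by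
        have h1 : k'+1-1 = k' := by omega
        have h4 : k' * (k'-1).factorial = k'.factorial := Nat.mul_factorial_pred (by omega)
        rw [h1, ← h4]
        push_cast
        ring
      rw [he, hf, pow_succ]
      calc L * ((k':ℝ) * ((k'-1).factorial : ℝ))
          ≤ L * (L * ((k'-1).factorial : ℝ)) := by
            apply mul_le_mul_of_nonneg_left _ hL0.le
            apply mul_le_mul_of_nonneg_right hkL (by positivity)
        _ = L * (L * ((k'-1).factorial : ℝ)) := rfl
        _ ≤ L * (L^(k'-q+1) * ((q-1).factorial : ℝ)) := by
            apply mul_le_mul_of_nonneg_left _ hL0.le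
            exact hIH
        _ = L^(k'-q+1) * L * ((q-1).factorial : ℝ) := by ring
  rcases Nat.lt_or_ge k q with hcase | hcase
  · -- k = q - 1
    have hkq : k = q - 1 := by omega
    subst hkq
    have he : q - 1 - q + 1 = 1 := by omega
    rw [he, pow_one]
    apply mul_le_mul_of_nonneg_left _ hL0.le
    exact_mod_cast Nat.factorial_le (by omega : q - 1 - 1 ≤ q - 1)
  · exact main k hcase hk2

noncomputable def Aq (q : ℕ) : ℝ := 16 * C0 q * ((q-1).factorial : ℝ) + 16 * (C0 q)^2

set_option maxHeartbeats 1000000 in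
lemma Sb_le (q n : ℕ) (hq : 1 ≤ q) (hn : (64:ℝ) ≤ n)
    (hM : 32 ≤ Real.log (Real.log n))
    (hqM : ((q:ℝ)+1) * Real.log (Real.log n) ≤ Real.log n) :
    Sb q n ≤ Aq q / Real.log (Real.log n) := by
  obtain ⟨hL1, hML, hT1, hTM, he2w, ⟨hw0, hwM⟩, hnpl, hnpu, hnp, h4L, h8L2, hp0, hp1⟩ :=
    base q n hq hn hM hqM
  set L := Real.log n with hLdef
  set M := Real.log L with hMdef
  set p := pEll q n with hpdef
  set w := smallomega n with hwdef
  have hn0 : (0:ℝ) < n := by linarith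
  have hL0 : (0:ℝ) < L := by linarith
  have hM0 : (0:ℝ) < M := by linarith
  have hC0 : (0:ℝ) < C0 q := by rw [C0]; positivity
  have hqf0 : (0:ℝ) < ((q-1).factorial : ℝ) := by exact_mod_cast (q-1).factorial_pos
  set V : ℝ := M * L / ((q-1).factorial : ℝ) with hVdef
  have hV0 : 0 < V := by positivity
  have hKfl : ((Kk n):ℝ) ≤ 3 * L / M := Nat.floor_le (by positivity)
  have hLM1 : 1 ≤ L / M := by
    rw [le_div_iff₀ hM0]; linarith
  -- per-k bound
  have hper : ∀ k ∈ Finset.Icc (q-1) (Kk n),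
      2 * (((n:ℝ) * rReal n k p + ((n:ℝ) * rReal n k p)^2) / (vkBound q n k)^2)
        ≤ (4*C0 q/V) * (1/((k:ℝ)+1)) + (8*(C0 q)^2/M) * (1/((k:ℝ)+1)^2) := by
    intro k hk
    rw [Finset.mem_Icc] at hk
    have hk2 : (k:ℝ) ≤ 3 * L / M := by
      calc (k:ℝ) ≤ ((Kk n):ℝ) := by exact_mod_cast hk.2
        _ ≤ 3 * L / M := hKfl
    have hmu := key_mu q n k hq hn hM hqM hk.1 hk2
    have hkey := key_v q n k hq hn hM hqM hk.1 hk2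
    rw [he2w] at hkey
    have hvV : V ≤ vkBound q n k := by
      rw [hVdef]; exact hkey
    have hv0 : 0 < vkBound q n k := lt_of_lt_of_le hV0 hvV
    set v := vkBound q n k with hvdef
    set nr := (n:ℝ) * rReal n k p with hnrdef
    set a : ℝ := 2 * C0 q / ((k:ℝ)+1) * Real.exp (-w) with hadef
    have hmu' : nr ≤ a * v := by
      rw [hadef]
      calc nr ≤ (2 * C0 q / ((k:ℝ)+1)) * Real.exp (-w) * v := hmu
        _ = 2 * C0 q / ((k:ℝ)+1) * Real.exp (-w) * v := by ring
    have hnr0 : 0 ≤ nr := by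
      rw [hnrdef]
      exact mul_nonneg hn0.le (rReal_nonneg hp0 hp1)
    have ha0 : 0 ≤ a := by rw [hadef]; positivity
    have h1 : (nr + nr^2) / v^2 ≤ a/v + a^2 := by
      rw [div_le_iff₀ (by positivity)]
      have h2 : nr^2 ≤ (a*v)^2 := pow_le_pow_left₀ hnr0 hmu' 2
      have h2' : (a*v)^2 = a^2 * v^2 := by ring
      have hexpand : (a/v + a^2) * v^2 = a*v + a^2*v^2 := by
        field_simp
      rw [hexpand]
      have h2'' : nr^2 ≤ a^2*v^2 := by rw [← h2']; exact h2
      linarith [hmu', h2'']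
    have h3 : a/v ≤ a/V := div_le_div_of_nonneg_left ha0 hV0 hvV
    have h4 : a ≤ 2*C0 q/((k:ℝ)+1) := by
      rw [hadef]
      have : Real.exp (-w) ≤ 1 := Real.exp_le_one_iff.mpr (by linarith)
      calc 2 * C0 q / ((k:ℝ)+1) * Real.exp (-w) ≤ 2 * C0 q / ((k:ℝ)+1) * 1 := by
            apply mul_le_mul_of_nonneg_left this (by positivity)
        _ = 2*C0 q/((k:ℝ)+1) := by ring
    have h5 : a^2 ≤ (2*C0 q)^2 * (1/M) * (1/((k:ℝ)+1)^2) := by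
      have he : Real.exp (-w)^2 = Real.exp (-(2*w)) := by
        rw [← Real.exp_nat_mul]
        congr 1
        push_cast
        ring
      have he2 : Real.exp (-(2*w)) = 1/M := by
        rw [Real.exp_neg, he2w, one_div]
      have ha2 : a^2 = (2*C0 q)^2 * Real.exp (-(2*w)) * (1/((k:ℝ)+1)^2) := by
        rw [hadef, ← he]
        field_simp
      rw [ha2, he2]
    calc 2 * ((nr + nr^2) / v^2) ≤ 2 * (a/v + a^2) := by linarith [h1]
      _ ≤ 2 * (a/V + (2*C0 q)^2 * (1/M) * (1/((k:ℝ)+1)^2)) := by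
          apply mul_le_mul_of_nonneg_left _ (by norm_num)
          apply add_le_add h3 h5
      _ ≤ 2 * ((2*C0 q/((k:ℝ)+1))/V + (2*C0 q)^2 * (1/M) * (1/((k:ℝ)+1)^2)) := by
          apply mul_le_mul_of_nonneg_left _ (by norm_num)
          apply add_le_add_left
          exact (div_le_div_iff_of_pos_right hV0).mpr h4
      _ = (4*C0 q/V) * (1/((k:ℝ)+1)) + (8*(C0 q)^2/M) * (1/((k:ℝ)+1)^2) := by
          field_simp
          ring
  -- sum bounds
  have hcard : ((Finset.Icc (q-1) (Kk n)).card : ℝ) ≤ ((Kk n):ℝ) + 1 := by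
    rw [Nat.card_Icc]
    have : Kk n + 1 - (q-1) ≤ Kk n + 1 := by omega
    calc ((Kk n + 1 - (q-1) : ℕ):ℝ) ≤ ((Kk n + 1 : ℕ):ℝ) := by exact_mod_cast this
      _ = ((Kk n):ℝ) + 1 := by push_cast; ring
  have hS1 : ∑ k ∈ Finset.Icc (q-1) (Kk n), (1/((k:ℝ)+1)) ≤ 4 * L / M := by
    calc ∑ k ∈ Finset.Icc (q-1) (Kk n), (1/((k:ℝ)+1))
        ≤ ∑ _k ∈ Finset.Icc (q-1) (Kk n), (1:ℝ) := by
          apply Finset.sum_le_sum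
          intro k _
          rw [div_le_one (by positivity)]
          linarith [Nat.cast_nonneg (α := ℝ) k]
      _ = ((Finset.Icc (q-1) (Kk n)).card : ℝ) := by rw [Finset.sum_const, nsmul_eq_mul, mul_one]
      _ ≤ ((Kk n):ℝ) + 1 := hcard
      _ ≤ 3 * L / M + L/M := by
          have := hLM1
          linarith [hKfl]
      _ = 4 * L / M := by ring
  have hS2 : ∑ k ∈ Finset.Icc (q-1) (Kk n), (1/((k:ℝ)+1)^2) ≤ 2 := by
    calc ∑ k ∈ Finset.Icc (q-1) (Kk n), (1/((k:ℝ)+1)^2)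
        ≤ ∑ k ∈ Finset.range (Kk n + 1), (1/((k:ℝ)+1)^2) := by
          apply Finset.sum_le_sum_of_subset_of_nonneg
          · intro k hk
            rw [Finset.mem_Icc] at hk
            rw [Finset.mem_range]
            omega
          · intro k _ _
            positivity
      _ ≤ 2 := sumsq _
  calc Sb q n ≤ ∑ k ∈ Finset.Icc (q-1) (Kk n),
        ((4*C0 q/V) * (1/((k:ℝ)+1)) + (8*(C0 q)^2/M) * (1/((k:ℝ)+1)^2)) := by
        rw [Sb]
        exact Finset.sum_le_sum hper
    _ = (4*C0 q/V) * (∑ k ∈ Finset.Icc (q-1) (Kk n), (1/((k:ℝ)+1)))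
        + (8*(C0 q)^2/M) * (∑ k ∈ Finset.Icc (q-1) (Kk n), (1/((k:ℝ)+1)^2)) := by
        rw [Finset.sum_add_distrib, Finset.mul_sum, Finset.mul_sum]
    _ ≤ (4*C0 q/V) * (4 * L / M) + (8*(C0 q)^2/M) * 2 := by
        apply add_le_add
        · apply mul_le_mul_of_nonneg_left hS1 (by positivity)
        · apply mul_le_mul_of_nonneg_left hS2 (by positivity)
    _ = 16 * C0 q * ((q-1).factorial : ℝ) / M^2 + 16*(C0 q)^2/M := by
        rw [hVdef]
        field_simp
        ring
    _ ≤ 16 * C0 q * ((q-1).factorial : ℝ) / M + 16*(C0 q)^2/M := by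
        apply add_le_add_left
        apply div_le_div_of_nonneg_left (by positivity) hM0
        have h1 : M * 1 ≤ M * M := mul_le_mul_of_nonneg_left (by linarith) hM0.le
        calc M = M * 1 := by ring
          _ ≤ M * M := h1
          _ = M^2 := by ring
    _ = Aq q / M := by
        rw [Aq, add_div]

open Filter in
lemma ev_facts (q : ℕ) : ∀ᶠ n : ℕ in atTop,
    (64:ℝ) ≤ n ∧ 32 ≤ Real.log (Real.log n) ∧
      ((q:ℝ)+1) * Real.log (Real.log n) ≤ Real.log n := by
  have h1 : ∀ᶠ n : ℕ in atTop, (64:ℝ) ≤ n :=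
    tendsto_natCast_atTop_atTop.eventually_ge_atTop 64
  have htL : Tendsto (fun n : ℕ => Real.log n) atTop atTop :=
    Real.tendsto_log_atTop.comp tendsto_natCast_atTop_atTop
  have htM : Tendsto (fun n : ℕ => Real.log (Real.log n)) atTop atTop :=
    Real.tendsto_log_atTop.comp htL
  have h2 : ∀ᶠ n : ℕ in atTop, 32 ≤ Real.log (Real.log n) := htM.eventually_ge_atTop 32
  have h3 : ∀ᶠ y : ℝ in atTop, ((q:ℝ)+1) * Real.log y ≤ y := by
    have hb := Real.isLittleO_log_id_atTop.bound (c := 1/((q:ℝ)+1)) (by positivity)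
    filter_upwards [hb, eventually_ge_atTop (0:ℝ)] with y hy hy0
    have habs : |Real.log y| ≤ 1/((q:ℝ)+1) * |y| := by
      simpa [Real.norm_eq_abs] using hy
    have h4 : Real.log y ≤ 1/((q:ℝ)+1) * y := by
      calc Real.log y ≤ |Real.log y| := le_abs_self _
        _ ≤ 1/((q:ℝ)+1) * |y| := habs
        _ = 1/((q:ℝ)+1) * y := by rw [abs_of_nonneg hy0]
    have hq1 : (0:ℝ) < (q:ℝ)+1 := by positivity
    calc ((q:ℝ)+1) * Real.log y ≤ ((q:ℝ)+1) * (1/((q:ℝ)+1)*y) :=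
          mul_le_mul_of_nonneg_left h4 hq1.le
      _ = y := by field_simp
  have h3' := htL.eventually h3
  filter_upwards [h1, h2, h3'] with n a b c
  exact ⟨a, b, c⟩

open Filter in
lemma Sb_tendsto' (q : ℕ) (hq : 1 ≤ q) : Tendsto (Sb q) atTop (nhds 0) := by
  have htL : Tendsto (fun n : ℕ => Real.log n) atTop atTop :=
    Real.tendsto_log_atTop.comp tendsto_natCast_atTop_atTop
  have htM : Tendsto (fun n : ℕ => Real.log (Real.log n)) atTop atTop :=
    Real.tendsto_log_atTop.comp htL
  have hA : Tendsto (fun n : ℕ => Aq q / Real.log (Real.log n)) atTop (nhds 0) :=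
    Tendsto.div_atTop tendsto_const_nhds htM
  apply tendsto_of_tendsto_of_tendsto_of_le_of_le' tendsto_const_nhds hA
  · filter_upwards [ev_facts q] with n hn
    obtain ⟨hn64, hM, hqM⟩ := hn
    obtain ⟨_, _, _, _, _, _, _, _, _, _, _, hp0, hp1⟩ := base q n hq hn64 hM hqM
    apply Finset.sum_nonneg
    intro k _
    have hr := rReal_nonneg (n := n) (k := k) hp0 hp1
    positivity
  · filter_upwards [ev_facts q] with n hn
    obtain ⟨hn64, hM, hqM⟩ := hn
    exact Sb_le q n hq hn64 hM hqM

lemma eventual_hyps (q : ℕ) (hq : 1 ≤ q) :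
    ∀ᶠ n in atTop, 0 ≤ pEll q n ∧ pEll q n ≤ 1 ∧
      (∀ k ∈ Finset.Icc (q-1) (Kk n), 0 < vkBound q n k) := by
  filter_upwards [ev_facts q] with n hn
  obtain ⟨hn64, hM, hqM⟩ := hn
  obtain ⟨hL1, _, _, _, _, _, _, _, _, _, _, hp0, hp1⟩ := base q n hq hn64 hM hqM
  refine ⟨hp0, hp1, ?_⟩
  intro k _
  have hL0 : (0:ℝ) < Real.log n := by linarith
  rw [vkBound]
  apply div_pos
  · exact mul_pos (Real.exp_pos _) (pow_pos hL0 _)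
  · exact_mod_cast (k-1).factorial_pos

lemma Sb_tendsto (q : ℕ) (hq : 1 ≤ q) : Tendsto (Sb q) atTop (nhds 0) :=
  Sb_tendsto' q hq

lemma Sb_nonneg {q n : ℕ} (hx0 : 0 ≤ pEll q n) (hx1 : pEll q n ≤ 1) : 0 ≤ Sb q n := by
  apply Finset.sum_nonneg
  intro k _
  have hr := rReal_nonneg (n := n) (k := k) hx0 hx1
  positivity

end Stmt6Aux

open Stmt6Aux in
/-- W.h.p. in `D_{n,p_ℓ}`, simultaneously for every `k` with
`q - 1 ≤ k ≤ 3 log n / log log n`, there are at most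
`v_k = e^{2ω(n)} (log n)^{k-q+1}/(k-1)!` vertices of in-degree at most `k`, and
at most `v_k` vertices of out-degree at most `k`. -/
theorem stmt6 (q : ℕ) (hq : 1 ≤ q) :
    Tendsto (fun n : ℕ =>
      ((digraphMeasure n (pEll q n))
        {ω | ∀ k : ℕ, q - 1 ≤ k → (k : ℝ) ≤ 3 * Real.log n / Real.log (Real.log n) →
          ((Finset.univ.filter fun v : Fin n => inDeg ω v ≤ k).card : ℝ) ≤ vkBound q n k ∧
          ((Finset.univ.filter fun v : Fin n => outDeg ω v ≤ k).card : ℝ) ≤ vkBound q n k}).toReal)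
      atTop (nhds 1) := by
  have hS := Sb_tendsto q hq
  have hbounds : ∀ᶠ n in atTop,
      1 - Sb q n ≤ ((digraphMeasure n (pEll q n)) (good q n)).toReal ∧
      ((digraphMeasure n (pEll q n)) (good q n)).toReal ≤ 1 := by
    filter_upwards [eventual_hyps q hq] with n hn
    obtain ⟨hx0, hx1, hv⟩ := hn
    set μ := digraphMeasure n (pEll q n)
    have hle : μ ((good q n)ᶜ) ≤ ENNReal.ofReal (Sb q n) :=
      measure_good_compl_le q n hx0 hx1 hv
    have hS0 : 0 ≤ Sb q n := Sb_nonneg hx0 hx1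
    have hcompl : μ (good q n) = 1 - μ ((good q n)ᶜ) := by
      have := prob_compl_eq_one_sub (μ := μ) (measSet ((good q n)ᶜ))
      rw [compl_compl] at this
      exact this
    have htr : (μ ((good q n)ᶜ)).toReal ≤ Sb q n :=
      ENNReal.toReal_le_of_le_ofReal hS0 hle
    have h1 : (μ (good q n)).toReal = 1 - (μ ((good q n)ᶜ)).toReal := by
      rw [hcompl, ENNReal.toReal_sub_of_le prob_le_one ENNReal.one_ne_top, ENNReal.toReal_one]
    constructor
    · rw [h1]; linarith
    · exact ENNReal.toReal_le_of_le_ofReal zero_le_one (by simp [prob_le_one])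
  have hgoal : Tendsto (fun n : ℕ => ((digraphMeasure n (pEll q n)) (good q n)).toReal)
      atTop (nhds 1) := by
    have hlow : Tendsto (fun n : ℕ => 1 - Sb q n) atTop (nhds 1) := by
      have := tendsto_const_nhds (x := (1:ℝ)) (f := atTop (α := ℕ)) |>.sub hS
      simpa using this
    exact tendsto_of_tendsto_of_tendsto_of_le_of_le' hlow tendsto_const_nhds
      (hbounds.mono fun n h => h.1) (hbounds.mono fun n h => h.2)
  exact hgoal
end

section
/- Let F be a random variable equal to the number of cycles of a uniformly random derangement of [n]. Then with probability 1 − o(1) as n → ∞, F ≤ 2 log n. -/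
open Filter Finset

section lemmas
variable {n : ℕ}

lemma two_pow_cycles_le (σ : Equiv.Perm (Fin n)) :
    2 ^ σ.cycleFactorsFinset.card ≤
      (Finset.univ.filter (fun A : Finset (Fin n) => ∀ x ∈ A, σ x ∈ A)).card := by
  classical
  rw [← Finset.card_powerset]
  apply Finset.card_le_card_of_injOn (fun S => S.sup Equiv.Perm.support)
  · intro S hS
    rw [Finset.mem_coe, Finset.mem_powerset] at hS
    rw [Finset.mem_coe, Finset.mem_filter]
    refine ⟨Finset.mem_univ _, ?_⟩
    intro x hx
    rw [Finset.mem_sup] at hx ⊢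
    obtain ⟨c, hcS, hxc⟩ := hx
    refine ⟨c, hcS, ?_⟩
    have hc := Equiv.Perm.mem_cycleFactorsFinset_iff.mp (hS hcS)
    rw [← hc.2 x hxc]
    exact Equiv.Perm.apply_mem_support.mpr hxc
  · have key : ∀ T T' : Finset (Equiv.Perm (Fin n)), T ⊆ σ.cycleFactorsFinset →
        T' ⊆ σ.cycleFactorsFinset →
        T.sup Equiv.Perm.support = T'.sup Equiv.Perm.support → T ⊆ T' := by
      intro T T' hT hT' hsup c hc
      have hcyc : c.IsCycle := (Equiv.Perm.mem_cycleFactorsFinset_iff.mp (hT hc)).1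
      obtain ⟨x, hx⟩ := hcyc.nonempty_support
      have hx' : x ∈ T'.sup Equiv.Perm.support := by
        rw [← hsup, Finset.mem_sup]; exact ⟨c, hc, hx⟩
      rw [Finset.mem_sup] at hx'
      obtain ⟨c', hc', hxc'⟩ := hx'
      have hcc : c = c' := by
        by_contra hne
        have hdisj := Equiv.Perm.cycleFactorsFinset_pairwise_disjoint σ (hT hc) (hT' hc') hne
        rw [Equiv.Perm.disjoint_iff_disjoint_support] at hdisj
        exact (Finset.disjoint_left.mp hdisj hx) hxc'
      exact hcc ▸ hc'
    intro S hS S' hS' h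
    rw [Finset.mem_coe, Finset.mem_powerset] at hS hS'
    exact Finset.Subset.antisymm (key S S' hS hS' h) (key S' S hS' hS h.symm)

lemma card_stab_le (A : Finset (Fin n)) :
    (Finset.univ.filter (fun σ : Equiv.Perm (Fin n) => ∀ x ∈ A, σ x ∈ A)).card ≤
      A.card.factorial * (n - A.card).factorial := by
  classical
  have h1 : (Finset.univ.filter (fun σ : Equiv.Perm (Fin n) => ∀ x ∈ A, σ x ∈ A)).card
      = Fintype.card {σ : Equiv.Perm (Fin n) // ∀ x ∈ A, σ x ∈ A} :=
    (Fintype.card_subtype _).symm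
  rw [h1]
  have h2 : Fintype.card (Equiv.Perm {x : Fin n // x ∈ A} × Equiv.Perm {x : Fin n // x ∉ A})
      = A.card.factorial * (n - A.card).factorial := by
    rw [Fintype.card_prod, Fintype.card_perm, Fintype.card_perm,
      Fintype.card_subtype_compl]
    simp [Fintype.card_coe]
  rw [← h2]
  have hiff : ∀ (σ : Equiv.Perm (Fin n)), (∀ x ∈ A, σ x ∈ A) → ∀ x : Fin n, x ∈ A ↔ σ x ∈ A := by
    intro σ hσ x
    refine ⟨fun hx => hσ x hx, fun hx => ?_⟩
    have himg : Finset.image σ A = A := by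
      apply Finset.eq_of_subset_of_card_le
      · intro y hy
        obtain ⟨z, hz, rfl⟩ := Finset.mem_image.mp hy
        exact hσ z hz
      · rw [Finset.card_image_of_injective _ σ.injective]
    rw [← himg] at hx
    obtain ⟨z, hz, hzx⟩ := Finset.mem_image.mp hx
    rwa [← σ.injective hzx]
  apply Fintype.card_le_of_injective
    (fun s => (s.1.subtypePerm (fun x => (hiff s.1 s.2 x).symm),
      s.1.subtypePerm (fun x => not_congr (hiff s.1 s.2 x).symm)))
  rintro ⟨σ, hσ⟩ ⟨σ', hσ'⟩ hpair
  simp only [Prod.mk.injEq] at hpair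
  apply Subtype.ext
  ext x
  by_cases hx : x ∈ A
  · have := congrArg (fun p => (p ⟨x, hx⟩ : {x : Fin n // x ∈ A})) hpair.1
    exact congrArg Fin.val (by simpa using congrArg Subtype.val this)
  · have := congrArg (fun p => (p ⟨x, hx⟩ : {x : Fin n // x ∉ A})) hpair.2
    exact congrArg Fin.val (by simpa using congrArg Subtype.val this)

end lemmas

section lemmas2
variable {n : ℕ}

lemma sum_two_pow_le (n : ℕ) :
    ∑ σ : Equiv.Perm (Fin n), 2 ^ σ.cycleFactorsFinset.card ≤ (n + 1).factorial := by
  classical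
  calc ∑ σ : Equiv.Perm (Fin n), 2 ^ σ.cycleFactorsFinset.card
      ≤ ∑ σ : Equiv.Perm (Fin n),
          (Finset.univ.filter (fun A : Finset (Fin n) => ∀ x ∈ A, σ x ∈ A)).card :=
        Finset.sum_le_sum (fun σ _ => two_pow_cycles_le σ)
    _ = ∑ A : Finset (Fin n),
          (Finset.univ.filter (fun σ : Equiv.Perm (Fin n) => ∀ x ∈ A, σ x ∈ A)).card := by
        simp only [Finset.card_filter]
        exact Finset.sum_comm
    _ ≤ ∑ A : Finset (Fin n), A.card.factorial * (n - A.card).factorial :=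
        Finset.sum_le_sum (fun A _ => card_stab_le A)
    _ = (n + 1).factorial := by
        rw [← Finset.powerset_univ, Finset.sum_powerset]
        have : ∀ j ∈ Finset.range ((Finset.univ : Finset (Fin n)).card + 1),
            ∑ t ∈ Finset.powersetCard j (Finset.univ : Finset (Fin n)),
              t.card.factorial * (n - t.card).factorial = n.factorial := by
          intro j hj
          rw [Finset.mem_range, Finset.card_univ, Fintype.card_fin] at hj
          have hj' : j ≤ n := Nat.lt_succ_iff.mp hj
          rw [Finset.sum_congr rfl (fun t ht => by
            rw [(Finset.mem_powersetCard.mp ht).2]), Finset.sum_const,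
            Finset.card_powersetCard, Finset.card_univ, Fintype.card_fin, smul_eq_mul,
            ← Nat.choose_mul_factorial_mul_factorial hj', mul_assoc]
        rw [Finset.sum_congr rfl this, Finset.sum_const, Finset.card_range,
          Finset.card_univ, Fintype.card_fin, smul_eq_mul, Nat.factorial_succ]

end lemmas2


/-- W.h.p. a uniformly random derangement of `[n]` has at most `2 log n`
cycles. -/
theorem stmt13 :
    Tendsto (fun n : ℕ =>
      (Nat.card {σ : Equiv.Perm (Fin n) // (∀ v, σ v ≠ v) ∧
          ((σ.cycleFactorsFinset.card : ℝ) ≤ 2 * Real.log n)} : ℝ) /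
        (Nat.card {σ : Equiv.Perm (Fin n) // ∀ v, σ v ≠ v} : ℝ))
      atTop (nhds 1) := by
  classical
  set a : ℝ := 2 * Real.log 2 with ha
  have ha1 : 1 < a := by
    have := Real.log_two_gt_d9
    rw [ha]; nlinarith
  -- filter versions
  set D : ℕ → ℕ := fun n =>
    (Finset.univ.filter (fun σ : Equiv.Perm (Fin n) => ∀ v, σ v ≠ v)).card with hD
  set G : ℕ → ℕ := fun n =>
    (Finset.univ.filter (fun σ : Equiv.Perm (Fin n) => (∀ v, σ v ≠ v) ∧
      ((σ.cycleFactorsFinset.card : ℝ) ≤ 2 * Real.log n))).card with hG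
  set B : ℕ → ℕ := fun n =>
    (Finset.univ.filter (fun σ : Equiv.Perm (Fin n) => (∀ v, σ v ≠ v) ∧
      ¬((σ.cycleFactorsFinset.card : ℝ) ≤ 2 * Real.log n))).card with hB
  have hNG : ∀ n : ℕ, Nat.card {σ : Equiv.Perm (Fin n) // (∀ v, σ v ≠ v) ∧
      ((σ.cycleFactorsFinset.card : ℝ) ≤ 2 * Real.log n)} = G n := by
    intro n
    rw [Nat.card_eq_fintype_card, hG]
    convert Fintype.card_subtype _ using 2
  have hND : ∀ n : ℕ, Nat.card {σ : Equiv.Perm (Fin n) // ∀ v, σ v ≠ v} = D n := by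
    intro n
    rw [Nat.card_eq_fintype_card, hD]
    convert Fintype.card_subtype _ using 2
  have hsplit : ∀ n : ℕ, G n + B n = D n := by
    intro n
    rw [hG, hB, hD]
    simp only [← Finset.filter_filter]
    exact Finset.card_filter_add_card_filter_not _
  -- D n = numDerangements n
  have hDnum : ∀ n : ℕ, D n = numDerangements n := by
    intro n
    have e : {σ : Equiv.Perm (Fin n) // ∀ v, σ v ≠ v} ≃ derangements (Fin n) :=
      Equiv.subtypeEquivRight (fun σ => by simp [derangements, Set.mem_setOf_eq])
    rw [← hND n, Nat.card_congr e, Nat.card_eq_fintype_card]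
    exact card_derangements_fin_eq_numDerangements
  -- eventually D n ≥ n!/4
  have hq : (4 : ℝ)⁻¹ < Real.exp (-1) := by
    rw [Real.exp_neg]
    have h4 : Real.exp 1 < 4 := by
      have := Real.exp_one_lt_d9; linarith
    exact inv_strictAnti₀ (Real.exp_pos 1) h4
  have hD4 : ∀ᶠ n : ℕ in atTop, (n.factorial : ℝ) / 4 ≤ (D n : ℝ) := by
    filter_upwards [numDerangements_tendsto_inv_e.eventually_const_lt hq] with n hn
    rw [hDnum n]
    have hfac : (0:ℝ) < (n.factorial : ℝ) := by positivity
    have := (lt_div_iff₀ hfac).mp hn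
    linarith
  -- key bound
  have hkey : ∀ n : ℕ, 1 ≤ n → (B n : ℝ) * (n:ℝ) ^ a ≤ ((n+1).factorial : ℝ) := by
    intro n hn
    have hn0 : (0:ℝ) < (n:ℝ) := by exact_mod_cast hn
    set s := Finset.univ.filter (fun σ : Equiv.Perm (Fin n) => (∀ v, σ v ≠ v) ∧
        ¬((σ.cycleFactorsFinset.card : ℝ) ≤ 2 * Real.log n)) with hs
    have hBs : (B n : ℕ) = s.card := rfl
    have hmin : ∀ σ ∈ s, (n:ℝ) ^ a ≤ (2:ℝ) ^ σ.cycleFactorsFinset.card := by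
      intro σ hσ
      rw [hs, Finset.mem_filter] at hσ
      have hlt : 2 * Real.log n < (σ.cycleFactorsFinset.card : ℝ) := lt_of_not_ge hσ.2.2
      have e1 : (n:ℝ) ^ a = (2:ℝ) ^ (2 * Real.log n) := by
        rw [Real.rpow_def_of_pos hn0, Real.rpow_def_of_pos two_pos, ha]
        ring_nf
      rw [e1, ← Real.rpow_natCast 2 σ.cycleFactorsFinset.card]
      exact Real.rpow_le_rpow_of_exponent_le one_le_two (le_of_lt hlt)
    have h1 : (B n : ℝ) * (n:ℝ) ^ a ≤ ∑ σ ∈ s, (2:ℝ) ^ σ.cycleFactorsFinset.card := by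
      have := Finset.card_nsmul_le_sum s
        (fun σ => (2:ℝ) ^ σ.cycleFactorsFinset.card) ((n:ℝ)^a) hmin
      rwa [nsmul_eq_mul, ← hBs] at this
    have h2 : ∑ σ ∈ s, (2:ℝ) ^ σ.cycleFactorsFinset.card ≤
        ∑ σ : Equiv.Perm (Fin n), (2:ℝ) ^ σ.cycleFactorsFinset.card :=
      Finset.sum_le_sum_of_subset_of_nonneg (Finset.subset_univ s)
        (fun i _ _ => by positivity)
    have h3 : ∑ σ : Equiv.Perm (Fin n), (2:ℝ) ^ σ.cycleFactorsFinset.card ≤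
        ((n+1).factorial : ℝ) := by
      have hnat := sum_two_pow_le n
      calc (∑ σ : Equiv.Perm (Fin n), (2:ℝ) ^ σ.cycleFactorsFinset.card)
          = ((∑ σ : Equiv.Perm (Fin n), 2 ^ σ.cycleFactorsFinset.card : ℕ) : ℝ) := by
            push_cast; rfl
        _ ≤ _ := by exact_mod_cast hnat
    linarith
  -- eventual bound on B/D
  have hbound : ∀ᶠ n : ℕ in atTop, (B n : ℝ) / (D n : ℝ) ≤ 8 * (n:ℝ) ^ (1 - a) := by
    filter_upwards [hD4, eventually_ge_atTop 1] with n hDn hn1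
    have hn0 : (0:ℝ) < (n:ℝ) := by exact_mod_cast hn1
    have hna : (0:ℝ) < (n:ℝ) ^ a := Real.rpow_pos_of_pos hn0 a
    have hfac : (0:ℝ) < (n.factorial : ℝ) := by positivity
    have hD0 : (0:ℝ) < (D n : ℝ) := lt_of_lt_of_le (by positivity) hDn
    have hB' : (B n : ℝ) ≤ ((n+1).factorial : ℝ) / (n:ℝ)^a := by
      rw [le_div_iff₀ hna]; exact hkey n hn1
    have step : (B n : ℝ) / (D n : ℝ) ≤
        (((n+1).factorial : ℝ) / (n:ℝ)^a) / ((n.factorial:ℝ)/4) :=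
      div_le_div₀ (by positivity) hB' (by positivity) hDn
    refine step.trans ?_
    have hfs : ((n+1).factorial : ℝ) = ((n:ℝ)+1) * (n.factorial : ℝ) := by
      push_cast [Nat.factorial_succ]; ring
    have e2 : (((n+1).factorial : ℝ) / (n:ℝ)^a) / ((n.factorial:ℝ)/4)
        = 4 * ((n:ℝ)+1) / (n:ℝ)^a := by
      rw [hfs]; field_simp
    have hpow : (n:ℝ) ^ (1 - a) = (n:ℝ) / (n:ℝ)^a := by
      rw [Real.rpow_sub hn0, Real.rpow_one]
    rw [e2, hpow, show (8:ℝ) * ((n:ℝ)/(n:ℝ)^a) = 8*(n:ℝ)/(n:ℝ)^a by ring]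
    rw [div_le_div_iff_of_pos_right hna]
    have hn1' : (1:ℝ) ≤ (n:ℝ) := by exact_mod_cast hn1
    linarith
  -- limit of the bound
  have hlim8 : Tendsto (fun n : ℕ => 8 * (n:ℝ) ^ (1 - a)) atTop (nhds 0) := by
    have h := (tendsto_rpow_neg_atTop (by linarith : (0:ℝ) < a - 1)).comp
      (tendsto_natCast_atTop_atTop (R := ℝ))
    have he : (fun n : ℕ => (n:ℝ) ^ (1-a)) = fun n : ℕ => (n:ℝ) ^ (-(a-1)) := by
      norm_num
    have := h.const_mul (8:ℝ)
    rw [mul_zero] at this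
    simpa [he, Function.comp] using this
  have hBD : Tendsto (fun n : ℕ => (B n : ℝ)/(D n : ℝ)) atTop (nhds 0) :=
    tendsto_of_tendsto_of_tendsto_of_le_of_le' tendsto_const_nhds hlim8
      (Eventually.of_forall fun n => by positivity) hbound
  -- conclude
  have heq : ∀ᶠ n : ℕ in atTop, (1 : ℝ) - (B n : ℝ)/(D n : ℝ) =
      (Nat.card {σ : Equiv.Perm (Fin n) // (∀ v, σ v ≠ v) ∧
          ((σ.cycleFactorsFinset.card : ℝ) ≤ 2 * Real.log n)} : ℝ) /
        (Nat.card {σ : Equiv.Perm (Fin n) // ∀ v, σ v ≠ v} : ℝ) := by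
    filter_upwards [hD4] with n hDn
    have hD0 : (0:ℝ) < (D n : ℝ) := lt_of_lt_of_le (by positivity) hDn
    rw [hNG n, hND n]
    have hGD : (G n : ℝ) = (D n : ℝ) - (B n : ℝ) := by
      have := hsplit n
      have : (G n : ℝ) + (B n : ℝ) = (D n : ℝ) := by exact_mod_cast congrArg (Nat.cast : ℕ → ℝ) this
      linarith
    rw [hGD, sub_div, div_self hD0.ne']
  have hfinal : Tendsto (fun n : ℕ => (1:ℝ) - (B n : ℝ)/(D n : ℝ)) atTop (nhds 1) := by
    have := (tendsto_const_nhds (x := (1:ℝ)) (f := atTop (α := ℕ))).sub hBD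
    simpa using this
  exact hfinal.congr' heq
end
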